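/- arXiv:1801.00328 — 2 statements merged into one kernel-verified Lean document; each statement's English description precedes it below -/
import Mathlib

section
/- In the path graph G(P) of a set P of n ≥ 5 points in convex position, every vertex representing a boundary path has degree exactly 3n-7. -/
namespace PG

/-- The `k`-th vertex (mod `n`) of the convex polygon. -/
def pt (n : ℕ) (hn : 0 < n) (k : ℕ) : Fin n := ⟨k % n, Nat.mod_lt _ hn⟩

/-- `e` is a boundary (convex hull) edge of the convex `n`-gon. -/
def IsHullEdge {n : ℕ} (e : Sym2 (Fin n)) : Prop :=
  ∃ a b : Fin n, e = s(a, b) ∧ ((a.val + 1) % n = b.val ∨ (b.val + 1) % n = a.val)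

instance {n : ℕ} : DecidablePred (IsHullEdge (n := n)) := fun _ => by
  unfold IsHullEdge; infer_instance

/-- Two chords of the convex `n`-gon cross (intersect in interior points):
their endpoint pairs are all distinct and separate each other in the cyclic order. -/
def Crosses {n : ℕ} (e f : Sym2 (Fin n)) : Prop :=
  ∃ a b c d : Fin n, e = s(a, b) ∧ f = s(c, d) ∧
    a ≠ b ∧ c ≠ d ∧ a ≠ c ∧ a ≠ d ∧ b ≠ c ∧ b ≠ d ∧
    (((c.val + n - a.val) % n < (b.val + n - a.val) % n) ↔
      ¬((d.val + n - a.val) % n < (b.val + n - a.val) % n))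

instance {n : ℕ} (e f : Sym2 (Fin n)) : Decidable (Crosses e f) := by
  unfold Crosses; infer_instance

/-- The edge set of the spanning path visiting the points in the order given
by the permutation `p`. -/
def pathEdges {n : ℕ} (p : Equiv.Perm (Fin n)) : Finset (Sym2 (Fin n)) :=
  Finset.univ.filter (fun e => ∃ i j : Fin n, e = s(p i, p j) ∧ j.val = i.val + 1)

/-- `E` is the edge set of a non-crossing (plane) spanning path. -/
def IsNCPath {n : ℕ} (E : Finset (Sym2 (Fin n))) : Prop :=
  (∃ p : Equiv.Perm (Fin n), E = pathEdges p) ∧ ∀ e ∈ E, ∀ f ∈ E, ¬ Crosses e f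

instance {n : ℕ} : DecidablePred (IsNCPath (n := n)) := fun _ => by
  unfold IsNCPath pathEdges; infer_instance

/-- Vertices of the path graph `G(P)`: non-crossing spanning paths. -/
def PVert (n : ℕ) := {E : Finset (Sym2 (Fin n)) // IsNCPath E}

instance {n : ℕ} : Fintype (PVert n) := Subtype.fintype _
instance {n : ℕ} : DecidableEq (PVert n) := Subtype.instDecidableEq

/-- The path graph `G(P)`: two plane spanning paths are adjacent iff their
edge sets differ in exactly two edges. -/
def pathGraph (n : ℕ) : SimpleGraph (PVert n) where
  Adj u v := u ≠ v ∧ (u.1 \ v.1 ∪ v.1 \ u.1).card = 2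
  symm := ⟨by rintro u v ⟨h1, h2⟩; exact ⟨h1.symm, by rwa [Finset.union_comm]⟩⟩
  loopless := ⟨by rintro u ⟨h, _⟩; exact h rfl⟩

instance {n : ℕ} : DecidableRel (pathGraph n).Adj := fun u v => by
  unfold pathGraph; infer_instance

/-- `v` is a boundary path: all its edges are hull edges. -/
def IsBoundary {n : ℕ} (v : PVert n) : Prop := ∀ e ∈ v.1, IsHullEdge e

/-- Number of diagonals (the level) of a path. -/
def diagCount {n : ℕ} (v : PVert n) : ℕ :=
  (v.1.filter (fun e => ¬ IsHullEdge e)).card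

/-- Degree of a point in an edge set. -/
def degIn {n : ℕ} (E : Finset (Sym2 (Fin n))) (x : Fin n) : ℕ :=
  (E.filter (fun e => x ∈ e)).card

set_option linter.unusedSectionVars false
set_option maxHeartbeats 1000000
variable {n : ℕ} [NeZero n]

lemma dval (a x : Fin n) : (x.val + n - a.val) % n = (x - a : Fin n).val := by
  rw [Fin.sub_def]
  have ha := a.isLt
  have : x.val + n - a.val = n - a.val + x.val := by omega
  rw [this]

lemma val_one' (h : 2 ≤ n) : (1 : Fin n).val = 1 := by
  rcases n with _|_|m
  · omega
  · omega
  · rfl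

lemma val_zero' : (0 : Fin n).val = 0 := rfl

lemma hull_succ_iff (h : 2 ≤ n) (a b : Fin n) : (a.val + 1) % n = b.val ↔ b = a + 1 := by
  simp only [Fin.ext_iff, Fin.add_def, val_one' h]
  omega

lemma sub_val_eq_zero_iff (a x : Fin n) : (x - a : Fin n).val = 0 ↔ x = a := by
  constructor
  · intro h
    have : (x - a : Fin n) = 0 := Fin.ext (by simpa using h)
    exact sub_eq_zero.mp this
  · rintro rfl; simp

lemma sub_val_inj (a x y : Fin n) (h : (x - a : Fin n).val = (y - a : Fin n).val) : x = y :=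
  sub_left_injective (Fin.ext h)

lemma not_crosses_self (e : Sym2 (Fin n)) : ¬ Crosses e e := by
  rintro ⟨a,b,c,d,he,hf,hab,hcd,hac,had,hbc,hbd,hx⟩
  rw [he, Sym2.eq_iff] at hf
  tauto

/-- core arithmetic: crossing contradiction when f's endpoints are cyclically adjacent -/
lemma cross_aux (h2 : 2 ≤ n) (a b c d : Fin n) (hd : d = c + 1)
    (hcd : c ≠ d) (hac : a ≠ c) (had : a ≠ d) (hbc : b ≠ c) (hbd : b ≠ d)
    (hx : ((c.val + n - a.val) % n < (b.val + n - a.val) % n) ↔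
      ¬((d.val + n - a.val) % n < (b.val + n - a.val) % n)) : False := by
  rw [dval, dval, dval] at hx
  have hda : (d - a : Fin n) = (c - a) + 1 := by rw [hd]; abel
  have hv : (d - a : Fin n).val = ((c-a : Fin n).val + 1) % n := by
    rw [hda, Fin.add_def, val_one' h2]
  have h1 : (c - a : Fin n).val ≠ 0 := fun h => hac.symm (sub_val_eq_zero_iff a c |>.mp h)
  have h2' : (d - a : Fin n).val ≠ 0 := fun h => had.symm (sub_val_eq_zero_iff a d |>.mp h)
  have h3 : (c - a : Fin n).val ≠ (b - a : Fin n).val := fun h => hbc.symm (sub_val_inj a c b h)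
  have h4 : (d - a : Fin n).val ≠ (b - a : Fin n).val := fun h => hbd.symm (sub_val_inj a d b h)
  have hc := (c - a : Fin n).isLt
  have hdd := (d - a : Fin n).isLt
  have hb := (b - a : Fin n).isLt
  have : (d - a : Fin n).val = (c - a : Fin n).val + 1 := by
    rcases Nat.lt_or_ge ((c-a : Fin n).val + 1) n with h | h
    · rw [hv, Nat.mod_eq_of_lt h]
    · exfalso; apply h2'
      have hn : (c - a : Fin n).val + 1 = n := by omega
      rw [hv, hn, Nat.mod_self]
  omega

/-- nothing crosses a hull edge, in either argument position -/
lemma not_crosses_of_hull (h2 : 2 ≤ n) (e f : Sym2 (Fin n))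
    (h : IsHullEdge e ∨ IsHullEdge f) : ¬ Crosses e f := by
  rintro ⟨a,b,c,d,he,hf,hab,hcd,hac,had,hbc,hbd,hx⟩
  rcases h with ⟨a',b',he',hh⟩ | ⟨c',d',hf',hh⟩
  · -- e is a hull edge : b = a+1 or a = b+1
    rw [he, Sym2.eq_iff] at he'
    have hba : b = a + 1 ∨ a = b + 1 := by
      rcases he' with ⟨rfl, rfl⟩ | ⟨rfl, rfl⟩
      · rcases hh with h | h
        · left; exact (hull_succ_iff h2 _ _).mp h
        · right; exact (hull_succ_iff h2 _ _).mp h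
      · rcases hh with h | h
        · right; exact (hull_succ_iff h2 _ _).mp h
        · left; exact (hull_succ_iff h2 _ _).mp h
    rw [dval, dval, dval] at hx
    have h1 : (c - a : Fin n).val ≠ 0 := fun h => hac.symm (sub_val_eq_zero_iff a c |>.mp h)
    have h2' : (d - a : Fin n).val ≠ 0 := fun h => had.symm (sub_val_eq_zero_iff a d |>.mp h)
    have h3 : (c - a : Fin n).val ≠ (b - a : Fin n).val := fun h => hbc.symm (sub_val_inj a c b h)
    have h4 : (d - a : Fin n).val ≠ (b - a : Fin n).val := fun h => hbd.symm (sub_val_inj a d b h)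
    have hc := (c - a : Fin n).isLt
    have hdd := (d - a : Fin n).isLt
    rcases hba with rfl | rfl
    · have : (a + 1 - a : Fin n).val = 1 := by
        have : (a + 1 - a : Fin n) = 1 := by abel
        rw [this, val_one' h2]
      omega
    · have : (b - (b+1) : Fin n).val = n - 1 := by
        have h01 : (b - (b+1) : Fin n) = 0 - 1 := by abel
        have hdv := dval (a := (1:Fin n)) (x := (0:Fin n))
        rw [val_zero', val_one' h2] at hdv
        have e1 : 0 + n - 1 = n - 1 := by omega
        rw [e1, Nat.mod_eq_of_lt (by omega)] at hdv
        rw [h01, ← hdv]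
      omega
  · -- f is a hull edge : d = c+1 or c = d+1
    rw [hf, Sym2.eq_iff] at hf'
    have hdc : d = c + 1 ∨ c = d + 1 := by
      rcases hf' with ⟨rfl, rfl⟩ | ⟨rfl, rfl⟩
      · rcases hh with h | h
        · left; exact (hull_succ_iff h2 _ _).mp h
        · right; exact (hull_succ_iff h2 _ _).mp h
      · rcases hh with h | h
        · right; exact (hull_succ_iff h2 _ _).mp h
        · left; exact (hull_succ_iff h2 _ _).mp h
    rcases hdc with h | h
    · exact cross_aux h2 a b c d h hcd hac had hbc hbd hx
    · exact cross_aux h2 a b d c h (Ne.symm hcd) had hac hbd hbc (by tauto)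

variable {n : ℕ}

lemma mem_pathEdges_iff (p : Equiv.Perm (Fin n)) (e : Sym2 (Fin n)) :
    e ∈ pathEdges p ↔ ∃ i j : Fin n, e = s(p i, p j) ∧ j.val = i.val + 1 := by
  simp [pathEdges]

lemma card_pathEdges (p : Equiv.Perm (Fin n)) : (pathEdges p).card = n - 1 := by
  refine Finset.card_eq_of_bijective
    (fun m hm => s(p ⟨m, by omega⟩, p ⟨m+1, by omega⟩)) ?_ ?_ ?_
  · intro e he
    rw [mem_pathEdges_iff] at he
    obtain ⟨i, j, rfl, hj⟩ := he
    have hj' := j.isLt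
    refine ⟨i.val, by omega, ?_⟩
    beta_reduce
    rw [Sym2.eq_iff]
    exact Or.inl ⟨congrArg p (Fin.ext rfl), congrArg p (Fin.ext (show i.val + 1 = j.val by omega))⟩
  · intro m hm
    rw [mem_pathEdges_iff]
    exact ⟨_, _, rfl, rfl⟩
  · intro i j hi hj hij
    rw [Sym2.eq_iff] at hij
    rcases hij with ⟨h1, h2⟩ | ⟨h1, h2⟩ <;>
      [skip; skip] <;>
      · have e1 := p.injective h1
        have e2 := p.injective h2
        rw [Fin.ext_iff] at e1 e2
        simp at e1 e2
        omega

lemma proper_edge (p : Equiv.Perm (Fin n)) (e : Sym2 (Fin n)) (he : e ∈ pathEdges p) :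
    ∃ x y : Fin n, x ≠ y ∧ e = s(x, y) := by
  rw [mem_pathEdges_iff] at he
  obtain ⟨i, j, rfl, hj⟩ := he
  refine ⟨p i, p j, fun h => ?_, rfl⟩
  have := p.injective h
  rw [Fin.ext_iff] at this
  omega

lemma degIn_pathEdges_le_two (p : Equiv.Perm (Fin n)) (x : Fin n) :
    degIn (pathEdges p) x ≤ 2 := by
  classical
  set k : Fin n := p.symm x with hk
  have hpk : p k = x := p.apply_symm_apply x
  set A : Sym2 (Fin n) := if h : k.val + 1 < n then s(p k, p ⟨k.val+1, h⟩) else s(p k, p k) with hA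
  set B : Sym2 (Fin n) := if h : 0 < k.val then s(p ⟨k.val-1, by omega⟩, p k) else s(p k, p k) with hB
  have hsub : (pathEdges p).filter (fun e => x ∈ e) ⊆ {A, B} := by
    intro e he
    rw [Finset.mem_filter, mem_pathEdges_iff] at he
    obtain ⟨⟨i, j, rfl, hj⟩, hx⟩ := he
    rw [Sym2.mem_iff] at hx
    rcases hx with hx | hx
    · have hik : i = k := by rw [← hpk] at hx; exact (p.injective hx.symm)
      subst hik
      have hlt : k.val + 1 < n := by have := j.isLt; omega
      have : j = ⟨k.val+1, hlt⟩ := Fin.ext (show j.val = k.val + 1 by omega)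
      rw [this]
      simp only [Finset.mem_insert, Finset.mem_singleton]
      left; rw [hA, dif_pos hlt]
    · have hik : j = k := by rw [← hpk] at hx; exact (p.injective hx.symm)
      subst hik
      have hpos : 0 < k.val := by omega
      have : i = ⟨k.val-1, by omega⟩ := Fin.ext (show i.val = k.val - 1 by omega)
      rw [this]
      simp only [Finset.mem_insert, Finset.mem_singleton]
      right; rw [hB, dif_pos hpos]
  calc degIn (pathEdges p) x ≤ ({A, B} : Finset _).card := Finset.card_le_card hsub
    _ ≤ 2 := Finset.card_insert_le _ _ |>.trans (by simp)

lemma pathEdges_const (p : Equiv.Perm (Fin n)) (hn : 0 < n) (g : Fin n → Prop)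
    (hg : ∀ x y : Fin n, s(x,y) ∈ pathEdges p → (g x ↔ g y)) (x y : Fin n) : g x ↔ g y := by
  have key : ∀ m (h : m < n), (g (p ⟨m, h⟩) ↔ g (p ⟨0, hn⟩)) := by
    intro m
    induction m with
    | zero => intro h; rfl
    | succ m ih =>
      intro h
      have hmem : s(p ⟨m, by omega⟩, p ⟨m+1, h⟩) ∈ pathEdges p := by
        rw [mem_pathEdges_iff]; exact ⟨_, _, rfl, rfl⟩
      exact ((hg _ _ hmem).symm).trans (ih (by omega))
  have hx : g x ↔ g (p ⟨0, hn⟩) := by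
    have : x = p ⟨(p.symm x).val, (p.symm x).isLt⟩ := by
      conv_lhs => rw [← p.apply_symm_apply x]
    rw [this]; exact key _ _
  have hy : g y ↔ g (p ⟨0, hn⟩) := by
    have : y = p ⟨(p.symm y).val, (p.symm y).isLt⟩ := by
      conv_lhs => rw [← p.apply_symm_apply y]
    rw [this]; exact key _ _
  exact hx.trans hy.symm


section PartC
variable {n : ℕ} [NeZero n]

/-- the set of all hull edges -/
def HE (n : ℕ) [NeZero n] : Finset (Sym2 (Fin n)) :=
  Finset.univ.image (fun k : Fin n => s(k, k+1))

lemma hull_iff (h2 : 2 ≤ n) (e : Sym2 (Fin n)) :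
    IsHullEdge e ↔ ∃ k : Fin n, e = s(k, k+1) := by
  constructor
  · rintro ⟨a, b, rfl, h | h⟩
    · exact ⟨a, by rw [(hull_succ_iff h2 a b).mp h]⟩
    · exact ⟨b, by rw [(hull_succ_iff h2 b a).mp h, Sym2.eq_swap]⟩
  · rintro ⟨k, rfl⟩
    exact ⟨k, k+1, rfl, Or.inl ((hull_succ_iff h2 k _).mpr rfl)⟩

lemma mem_HE_iff (e : Sym2 (Fin n)) : e ∈ HE n ↔ ∃ k : Fin n, e = s(k, k+1) := by
  simp [HE, eq_comm]

lemma val_add_one' (h2 : 2 ≤ n) (a : Fin n) : (a+1).val = (a.val + 1) % n := by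
  rw [Fin.add_def, val_one' h2]

lemma hullgen_inj (h3 : 3 ≤ n) (k l : Fin n) (h : s(k, k+1) = s(l, l+1)) : k = l := by
  rw [Sym2.eq_iff] at h
  rcases h with ⟨h1, _⟩ | ⟨h1, h2'⟩
  · exact h1
  · exfalso
    rw [Fin.ext_iff, val_add_one' (by omega)] at h1 h2'
    have hk := k.isLt
    have hl := l.isLt
    rcases Nat.lt_or_ge (l.val + 1) n with h | h
    · rw [Nat.mod_eq_of_lt h] at h1
      rcases Nat.lt_or_ge (k.val + 1) n with h' | h'
      · rw [Nat.mod_eq_of_lt h'] at h2'; omega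
      · have : k.val + 1 = n := by omega
        rw [this, Nat.mod_self] at h2'; omega
    · have hln : l.val + 1 = n := by omega
      rw [hln, Nat.mod_self] at h1
      rcases Nat.lt_or_ge (k.val + 1) n with h' | h'
      · rw [Nat.mod_eq_of_lt h'] at h2'; omega
      · have : k.val + 1 = n := by omega
        rw [this, Nat.mod_self] at h2'; omega

lemma card_HE (h3 : 3 ≤ n) : (HE n).card = n := by
  rw [HE, Finset.card_image_of_injective _ (fun k l h => hullgen_inj h3 k l h)]
  simp

/-- structure of a boundary path -/
lemma boundary_structure (h3 : 3 ≤ n) (v : PVert n) (hv : IsBoundary v) :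
    ∃ a : Fin n, v.1 = (HE n).erase s(a, a+1) := by
  classical
  have hsub : v.1 ⊆ HE n := by
    intro e he
    rw [mem_HE_iff]
    exact (hull_iff (by omega) e).mp (hv e he)
  obtain ⟨p, hp⟩ := v.2.1
  have hcard : v.1.card = n - 1 := by rw [hp, card_pathEdges]
  have hd : ((HE n) \ v.1).card = 1 := by
    rw [Finset.card_sdiff_of_subset hsub, card_HE h3, hcard]; omega
  obtain ⟨m, hm⟩ := Finset.card_eq_one.mp hd
  have hmHE : m ∈ HE n := by
    have : m ∈ (HE n) \ v.1 := by rw [hm]; exact Finset.mem_singleton_self m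
    exact (Finset.mem_sdiff.mp this).1
  have hmnv : m ∉ v.1 := by
    have : m ∈ (HE n) \ v.1 := by rw [hm]; exact Finset.mem_singleton_self m
    exact (Finset.mem_sdiff.mp this).2
  obtain ⟨a, ha⟩ := (mem_HE_iff m).mp hmHE
  refine ⟨a, ?_⟩
  rw [← ha]
  ext e
  rw [Finset.mem_erase]
  constructor
  · intro he
    refine ⟨fun h => hmnv (h ▸ he), hsub he⟩
  · rintro ⟨hne, heHE⟩
    by_contra hev
    have : e ∈ (HE n) \ v.1 := Finset.mem_sdiff.mpr ⟨heHE, hev⟩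
    rw [hm, Finset.mem_singleton] at this
    exact hne this

end PartC

section PartD
variable {n : ℕ} [NeZero n]

/-- rotation on edges -/
def rotE (r : Fin n) : Sym2 (Fin n) → Sym2 (Fin n) := Sym2.map (· + r)

lemma rotE_rotE (r : Fin n) (e : Sym2 (Fin n)) : rotE (-r) (rotE r e) = e := by
  rw [rotE, rotE, Sym2.map_map]
  have : ((· + (-r)) ∘ (· + r) : Fin n → Fin n) = id := by
    funext x; simp
  rw [this, Sym2.map_id, id_eq]

lemma rotE_inj (r : Fin n) : Function.Injective (rotE r) :=
  Sym2.map.injective (add_left_injective r)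

lemma rotE_pair (r : Fin n) (a b : Fin n) : rotE r s(a, b) = s(a + r, b + r) := rfl

lemma rotE_hull (h2 : 2 ≤ n) (r : Fin n) (e : Sym2 (Fin n)) :
    IsHullEdge (rotE r e) ↔ IsHullEdge e := by
  have key : ∀ (s : Fin n) (f : Sym2 (Fin n)), IsHullEdge f → IsHullEdge (rotE s f) := by
    rintro s f hf
    rw [hull_iff h2] at hf ⊢
    obtain ⟨k, rfl⟩ := hf
    exact ⟨k + s, by rw [rotE_pair]; congr 1; abel⟩
  constructor
  · intro h
    have := key (-r) _ h
    rwa [rotE_rotE] at this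
  · exact key r e

lemma rot_dval (r a x : Fin n) :
    ((x + r).val + n - (a + r).val) % n = (x.val + n - a.val) % n := by
  rw [dval, dval]
  congr 1
  abel

lemma rotE_crosses (r : Fin n) (e f : Sym2 (Fin n)) :
    Crosses (rotE r e) (rotE r f) ↔ Crosses e f := by
  have key : ∀ (s : Fin n) (e f : Sym2 (Fin n)), Crosses e f → Crosses (rotE s e) (rotE s f) := by
    rintro s e f ⟨a,b,c,d,rfl,rfl,hab,hcd,hac,had,hbc,hbd,hx⟩
    refine ⟨a+s, b+s, c+s, d+s, rotE_pair .., rotE_pair ..,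
      fun h => hab (add_left_injective s h), fun h => hcd (add_left_injective s h),
      fun h => hac (add_left_injective s h), fun h => had (add_left_injective s h),
      fun h => hbc (add_left_injective s h), fun h => hbd (add_left_injective s h), ?_⟩
    rw [rot_dval, rot_dval, rot_dval]
    exact hx
  constructor
  · intro h
    have := key (-r) _ _ h
    rwa [rotE_rotE, rotE_rotE] at this
  · exact key r e f

lemma rot_pathEdges (r : Fin n) (p : Equiv.Perm (Fin n)) :
    pathEdges (p.trans (Equiv.addRight r)) = (pathEdges p).image (rotE r) := by
  ext e
  rw [mem_pathEdges_iff, Finset.mem_image]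
  constructor
  · rintro ⟨i, j, rfl, hj⟩
    exact ⟨s(p i, p j), (mem_pathEdges_iff p _).mpr ⟨i, j, rfl, hj⟩, rfl⟩
  · rintro ⟨e', he', rfl⟩
    rw [mem_pathEdges_iff] at he'
    obtain ⟨i, j, rfl, hj⟩ := he'
    exact ⟨i, j, rfl, hj⟩

lemma rot_NCPath (r : Fin n) (E : Finset (Sym2 (Fin n))) (h : IsNCPath E) :
    IsNCPath (E.image (rotE r)) := by
  obtain ⟨⟨p, rfl⟩, hnc⟩ := h
  constructor
  · exact ⟨p.trans (Equiv.addRight r), (rot_pathEdges r p).symm⟩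
  · intro e he f hf hc
    rw [Finset.mem_image] at he hf
    obtain ⟨e₀, he₀, rfl⟩ := he
    obtain ⟨f₀, hf₀, rfl⟩ := hf
    exact hnc e₀ he₀ f₀ hf₀ ((rotE_crosses r e₀ f₀).mp hc)

/-- rotation as an equivalence on vertices of the path graph -/
def rotV (r : Fin n) : PVert n ≃ PVert n where
  toFun v := ⟨v.1.image (rotE r), rot_NCPath r v.1 v.2⟩
  invFun v := ⟨v.1.image (rotE (-r)), rot_NCPath (-r) v.1 v.2⟩
  left_inv v := by
    apply Subtype.ext
    simp only [Finset.image_image]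
    rw [show (rotE (-r) ∘ rotE r : _) = id from funext (fun e => rotE_rotE r e), Finset.image_id]
  right_inv v := by
    apply Subtype.ext
    simp only [Finset.image_image]
    have : ∀ e, rotE r (rotE (-r) e) = e := by
      intro e
      have := rotE_rotE (-r) e
      rwa [neg_neg] at this
    rw [show (rotE r ∘ rotE (-r) : _) = id from funext this, Finset.image_id]

lemma rotV_adj (r : Fin n) (u v : PVert n) :
    (pathGraph n).Adj (rotV r u) (rotV r v) ↔ (pathGraph n).Adj u v := by
  show (_ ≠ _ ∧ _) ↔ (_ ≠ _ ∧ _)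
  have h1 : (rotV r u ≠ rotV r v) ↔ u ≠ v := by
    constructor
    · intro h he; exact h (he ▸ rfl)
    · intro h he; exact h ((rotV r).injective he)
  rw [h1]
  have h2 : ((rotV r u).1 \ (rotV r v).1 ∪ (rotV r v).1 \ (rotV r u).1).card
      = (u.1 \ v.1 ∪ v.1 \ u.1).card := by
    have hu : ((rotV r) u).1 = u.1.image (rotE r) := rfl
    have hv : ((rotV r) v).1 = v.1.image (rotE r) := rfl
    rw [hu, hv,← Finset.image_sdiff _ _ (rotE_inj r), ← Finset.image_sdiff _ _ (rotE_inj r),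
      ← Finset.image_union, Finset.card_image_of_injective _ (rotE_inj r)]
  rw [h2]

lemma rotV_degree (r : Fin n) (v : PVert n) :
    (pathGraph n).degree (rotV r v) = (pathGraph n).degree v := by
  classical
  unfold SimpleGraph.degree
  rw [show (pathGraph n).neighborFinset (rotV r v)
      = ((pathGraph n).neighborFinset v).map (rotV r).toEmbedding from ?_]
  · rw [Finset.card_map]
  · ext u
    rw [SimpleGraph.mem_neighborFinset, Finset.mem_map_equiv]
    rw [SimpleGraph.mem_neighborFinset]
    constructor
    · intro h
      rw [← (rotV r).apply_symm_apply u] at h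
      exact (rotV_adj r v _).mp h
    · intro h
      rw [← (rotV r).apply_symm_apply u]
      exact (rotV_adj r v _).mpr h

end PartD

section PartE1
variable {n : ℕ} [NeZero n]

/-- point with natural index -/
def P (n : ℕ) [NeZero n] (k : ℕ) : Fin n :=
  ⟨k % n, Nat.mod_lt _ (Nat.pos_of_ne_zero (NeZero.ne n))⟩

lemma P_val {k : ℕ} (h : k < n) : (P n k).val = k := Nat.mod_eq_of_lt h

lemma P_eq_self (x : Fin n) : P n x.val = x := Fin.ext (Nat.mod_eq_of_lt x.isLt)

lemma P_inj {k l : ℕ} (hk : k < n) (hl : l < n) : P n k = P n l ↔ k = l := by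
  rw [Fin.ext_iff, P_val hk, P_val hl]

lemma P_succ (k : ℕ) : P n (k+1) = P n k + 1 := by
  apply Fin.ext
  rw [Fin.add_def, Fin.val_one']
  exact Nat.add_mod k 1 n

/-- canonical hull edge -/
def ek (n : ℕ) [NeZero n] (k : ℕ) : Sym2 (Fin n) := s(P n k, P n (k+1))

lemma ek_fin (K : Fin n) : ek n K.val = s(K, K+1) := by
  rw [ek, P_eq_self, P_succ, P_eq_self]

/-- the canonical boundary path: 0-1-...-(n-1) -/
def E₀ (n : ℕ) [NeZero n] : Finset (Sym2 (Fin n)) :=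
  (HE n).erase (ek n (n-1))

lemma ek_eq_hullgen (k : ℕ) : ek n k = s(P n k, P n k + 1) := by rw [ek, P_succ]

lemma mem_E₀ (h3 : 3 ≤ n) (e : Sym2 (Fin n)) :
    e ∈ E₀ n ↔ ∃ k, k + 1 < n ∧ e = ek n k := by
  rw [E₀, Finset.mem_erase, mem_HE_iff]
  constructor
  · rintro ⟨hne, K, rfl⟩
    refine ⟨K.val, ?_, (ek_fin K).symm⟩
    have hK := K.isLt
    rcases Nat.lt_or_ge (K.val + 1) n with h | h
    · exact h
    · exfalso
      apply hne
      have : K = P n (n-1) := by rw [Fin.ext_iff, P_val (by omega)]; omega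
      rw [ek_eq_hullgen, ← this]
  · rintro ⟨k, hk, rfl⟩
    constructor
    · rw [ek_eq_hullgen, ek_eq_hullgen]
      intro h
      have := hullgen_inj h3 _ _ h
      rw [P_inj (by omega) (by omega)] at this
      omega
    · exact ⟨P n k, ek_eq_hullgen k⟩

lemma ek_mem_E₀ (h3 : 3 ≤ n) {k : ℕ} (hk : k + 1 < n) : ek n k ∈ E₀ n :=
  (mem_E₀ h3 _).mpr ⟨k, hk, rfl⟩

lemma ek_inj (h3 : 3 ≤ n) {k l : ℕ} (hk : k < n) (hl : l < n) :
    ek n k = ek n l ↔ k = l := by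
  constructor
  · intro h
    rw [ek_eq_hullgen, ek_eq_hullgen] at h
    have := hullgen_inj h3 _ _ h
    rwa [P_inj hk hl] at this
  · rintro rfl; rfl

lemma sym_P_eq (h3 : 3 ≤ n) {x y u v : ℕ} (hx : x < n) (hy : y < n) (hu : u < n) (hv : v < n) :
    s(P n x, P n y) = s(P n u, P n v) ↔ (x = u ∧ y = v) ∨ (x = v ∧ y = u) := by
  rw [Sym2.eq_iff, P_inj hx hu, P_inj hy hv, P_inj hx hv, P_inj hy hu]

lemma s_mem_E₀_iff (h3 : 3 ≤ n) {x y : ℕ} (hx : x < n) (hy : y < n) :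
    s(P n x, P n y) ∈ E₀ n ↔ (x + 1 = y ∨ y + 1 = x) := by
  rw [mem_E₀ h3]
  constructor
  · rintro ⟨k, hk, he⟩
    rw [ek, sym_P_eq h3 hx hy (by omega) (by omega)] at he
    omega
  · intro h
    rcases h with h | h
    · exact ⟨x, by omega, by rw [ek, h]⟩
    · exact ⟨y, by omega, by rw [ek, h, Sym2.eq_swap]⟩

end PartE1

section PartE2
variable {n : ℕ} [NeZero n]

/-- the permutation realizing candidate neighbor paths: possibly reverse the
prefix `[0..i]` (if `b1`) and/or the suffix `[i+1..n-1]` (if `b2`). -/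
def Q (n : ℕ) [NeZero n] (i : ℕ) (b1 b2 : Bool) : Fin n → Fin n := fun j =>
  if j.val ≤ i then (if b1 then P n (i - j.val) else j)
  else (if b2 then P n (n + i - j.val) else j)

lemma Q_lt {i x : ℕ} {b1 b2 : Bool} (hx : x ≤ i) (hxn : x < n) :
    Q n i b1 b2 (P n x) = if b1 then P n (i - x) else P n x := by
  rw [Q, P_val hxn, if_pos hx]

lemma Q_lt_t {i x : ℕ} {b2 : Bool} (hx : x ≤ i) (hxn : x < n) :
    Q n i true b2 (P n x) = P n (i - x) := by
  rw [Q_lt hx hxn, if_pos rfl]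

lemma Q_lt_f {i x : ℕ} {b2 : Bool} (hx : x ≤ i) (hxn : x < n) :
    Q n i false b2 (P n x) = P n x := by
  rw [Q_lt hx hxn, if_neg (by simp)]

lemma Q_gt {i x : ℕ} {b1 b2 : Bool} (hx : i < x) (hxn : x < n) :
    Q n i b1 b2 (P n x) = if b2 then P n (n + i - x) else P n x := by
  rw [Q, P_val hxn, if_neg (by omega)]

lemma Q_gt_t {i x : ℕ} {b1 : Bool} (hx : i < x) (hxn : x < n) :
    Q n i b1 true (P n x) = P n (n + i - x) := by
  rw [Q_gt hx hxn, if_pos rfl]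

lemma Q_gt_f {i x : ℕ} {b1 : Bool} (hx : i < x) (hxn : x < n) :
    Q n i b1 false (P n x) = P n x := by
  rw [Q_gt hx hxn, if_neg (by simp)]

lemma Q_invol {i : ℕ} {b1 b2 : Bool} (hi : i + 1 < n) :
    Function.Involutive (Q n i b1 b2) := by
  intro j
  have hj := j.isLt
  conv_lhs => rw [← P_eq_self j]
  conv_rhs => rw [← P_eq_self j]
  by_cases h : j.val ≤ i
  · cases b1 with
    | false => rw [Q_lt_f h hj, Q_lt_f h hj]
    | true =>
      rw [Q_lt_t h hj, Q_lt_t (by omega) (by omega), show i - (i - j.val) = j.val by omega]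
  · cases b2 with
    | false => rw [Q_gt_f (by omega) hj, Q_gt_f (by omega) hj]
    | true =>
      rw [Q_gt_t (by omega) hj, Q_gt_t (by omega) (by omega),
        show n + i - (n + i - j.val) = j.val by omega]

/-- candidate permutation -/
def Qp (n : ℕ) [NeZero n] (i : ℕ) (b1 b2 : Bool) (hi : i + 1 < n) : Equiv.Perm (Fin n) :=
  Function.Involutive.toPerm _ (Q_invol (b1 := b1) (b2 := b2) hi)

lemma Qp_apply {i : ℕ} {b1 b2 : Bool} (hi : i + 1 < n) (j : Fin n) :
    Qp n i b1 b2 hi j = Q n i b1 b2 j := rfl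

/-- the chord added by `Qp` -/
def chord (n : ℕ) [NeZero n] (i : ℕ) (b1 b2 : Bool) : Sym2 (Fin n) :=
  s(if b1 then P n 0 else P n i, if b2 then P n (n-1) else P n (i+1))

lemma chord_eval (i : ℕ) (b1 b2 : Bool) :
    chord n i b1 b2 = s(Q n i b1 b2 (P n i), Q n i b1 b2 (P n (i+1))) ∨ (i + 1 ≥ n) := by
  by_cases hi : i + 1 < n
  · left
    have c1 : (if b1 then P n 0 else P n i) = Q n i b1 b2 (P n i) := by
      cases b1 with
      | false => rw [Q_lt_f (le_refl i) (by omega)]; simp only [Bool.false_eq_true, if_false]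
      | true => rw [Q_lt_t (le_refl i) (by omega), Nat.sub_self]; simp
    have c2 : (if b2 then P n (n-1) else P n (i+1)) = Q n i b1 b2 (P n (i+1)) := by
      cases b2 with
      | false => rw [Q_gt_f (by omega) (by omega)]; simp only [Bool.false_eq_true, if_false]
      | true =>
        rw [Q_gt_t (by omega) (by omega), show n + i - (i+1) = n - 1 by omega]
        simp
    rw [chord, c1, c2]
  · right; omega

lemma pathEdges_Qp (h3 : 3 ≤ n) {i : ℕ} {b1 b2 : Bool} (hi : i + 1 < n) :
    pathEdges (Qp n i b1 b2 hi) = ((E₀ n).erase (ek n i)) ∪ {chord n i b1 b2} := by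
  have hch : chord n i b1 b2 = s(Q n i b1 b2 (P n i), Q n i b1 b2 (P n (i+1))) := by
    rcases chord_eval (n := n) i b1 b2 with h | h
    · exact h
    · omega
  ext e
  rw [mem_pathEdges_iff, Finset.mem_union, Finset.mem_erase, Finset.mem_singleton]
  constructor
  · rintro ⟨a, b, rfl, hab⟩
    have ha := a.isLt
    have hbb := b.isLt
    have hPa : a = P n a.val := (P_eq_self a).symm
    have hPb : b = P n b.val := (P_eq_self b).symm
    rcases Nat.lt_trichotomy a.val i with h | h | h
    · -- prefix zone
      left
      rw [Qp_apply, Qp_apply, hPa, hPb]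
      cases b1 with
      | false =>
        rw [Q_lt_f (by omega) ha, Q_lt_f (by omega) hbb]
        have he : s(P n a.val, P n b.val) = ek n a.val := by rw [ek, hab]
        rw [he]
        exact ⟨by rw [Ne, ek_inj h3 (by omega) (by omega)]; omega,
          ek_mem_E₀ h3 (by omega)⟩
      | true =>
        rw [Q_lt_t (by omega) ha, Q_lt_t (by omega) hbb]
        have he : s(P n (i - a.val), P n (i - b.val)) = ek n (i - b.val) := by
          rw [ek, show i - b.val + 1 = i - a.val by omega, Sym2.eq_swap]
        rw [he]
        exact ⟨by rw [Ne, ek_inj h3 (by omega) (by omega)]; omega,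
          ek_mem_E₀ h3 (by omega)⟩
    · -- the split pair
      right
      rw [Qp_apply, Qp_apply, hPa, hPb, hch, h, show b.val = i + 1 by omega]
    · -- suffix zone
      left
      rw [Qp_apply, Qp_apply, hPa, hPb]
      cases b2 with
      | false =>
        rw [Q_gt_f (by omega) ha, Q_gt_f (by omega) hbb]
        have he : s(P n a.val, P n b.val) = ek n a.val := by rw [ek, hab]
        rw [he]
        exact ⟨by rw [Ne, ek_inj h3 (by omega) (by omega)]; omega,
          ek_mem_E₀ h3 (by omega)⟩
      | true =>
        rw [Q_gt_t (by omega) ha, Q_gt_t (by omega) hbb]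
        have he : s(P n (n + i - a.val), P n (n + i - b.val)) = ek n (n + i - b.val) := by
          rw [ek, show n + i - b.val + 1 = n + i - a.val by omega, Sym2.eq_swap]
        rw [he]
        exact ⟨by rw [Ne, ek_inj h3 (by omega) (by omega)]; omega,
          ek_mem_E₀ h3 (by omega)⟩
  · rintro (⟨hne, hmem⟩ | rfl)
    · -- a hull edge of E₀ other than ek i
      obtain ⟨k, hk, rfl⟩ := (mem_E₀ h3 _).mp hmem
      have hki : k ≠ i := fun h => hne (by rw [h])
      rcases Nat.lt_or_ge k i with h | h
      · cases b1 with
        | false =>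
          refine ⟨P n k, P n (k+1), ?_, ?_⟩
          · rw [Qp_apply, Qp_apply, Q_lt_f (by omega) (by omega),
              Q_lt_f (by omega) (by omega), ek]
          · rw [P_val (by omega), P_val (by omega)]
        | true =>
          refine ⟨P n (i - k - 1), P n (i - k), ?_, ?_⟩
          · rw [Qp_apply, Qp_apply, Q_lt_t (by omega) (by omega),
              Q_lt_t (by omega) (by omega), show i - (i - k - 1) = k + 1 by omega,
              show i - (i - k) = k by omega, ek, Sym2.eq_swap]
          · rw [P_val (by omega), P_val (by omega)]; omega
      · have hik : i < k := by omega
        cases b2 with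
        | false =>
          refine ⟨P n k, P n (k+1), ?_, ?_⟩
          · rw [Qp_apply, Qp_apply, Q_gt_f (by omega) (by omega),
              Q_gt_f (by omega) (by omega), ek]
          · rw [P_val (by omega), P_val (by omega)]
        | true =>
          refine ⟨P n (n + i - k - 1), P n (n + i - k), ?_, ?_⟩
          · rw [Qp_apply, Qp_apply, Q_gt_t (by omega) (by omega),
              Q_gt_t (by omega) (by omega), show n + i - (n + i - k - 1) = k + 1 by omega,
              show n + i - (n + i - k) = k by omega, ek, Sym2.eq_swap]
          · rw [P_val (by omega), P_val (by omega)]; omega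
    · -- the chord
      refine ⟨P n i, P n (i+1), ?_, ?_⟩
      · rw [Qp_apply, Qp_apply, hch]
      · rw [P_val (by omega), P_val (by omega)]

end PartE2

section PartE3
variable {n : ℕ} [NeZero n]

/-- chord of a candidate indexed by `(i, t)` with `t ∈ {0,1,2}` -/
def chordT (n : ℕ) [NeZero n] (z : ℕ × ℕ) : Sym2 (Fin n) :=
  chord n z.1 (decide (z.2 ≠ 1)) (decide (z.2 ≠ 0))

/-- candidate neighbor edge set -/
def NE (n : ℕ) [NeZero n] (z : ℕ × ℕ) : Finset (Sym2 (Fin n)) :=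
  ((E₀ n).erase (ek n z.1)) ∪ {chordT n z}

/-- index set -/
def T (n : ℕ) : Finset (ℕ × ℕ) :=
  ((Finset.Ioo 0 (n-2)) ×ˢ ({0,1} : Finset ℕ)) ∪ ((Finset.range (n-1)) ×ˢ ({2} : Finset ℕ))

lemma mem_T (z : ℕ × ℕ) : z ∈ T n ↔
    (0 < z.1 ∧ z.1 < n - 2 ∧ (z.2 = 0 ∨ z.2 = 1)) ∨ (z.1 < n - 1 ∧ z.2 = 2) := by
  rw [T, Finset.mem_union, Finset.mem_product, Finset.mem_product, Finset.mem_Ioo,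
    Finset.mem_range, Finset.mem_insert, Finset.mem_singleton, Finset.mem_singleton]
  omega

lemma card_T (h5 : 5 ≤ n) : (T n).card = 3 * n - 7 := by
  rw [T, Finset.card_union_of_disjoint]
  · rw [Finset.card_product, Finset.card_product]
    simp only [Nat.card_Ioo, Finset.card_range]
    have : ({0,1} : Finset ℕ).card = 2 := by decide
    rw [this]
    simp only [Finset.card_singleton]
    omega
  · rw [Finset.disjoint_left]
    rintro ⟨i, t⟩ h1 h2
    simp [Finset.mem_product] at h1 h2
    omega

lemma chordT_0 (i : ℕ) : chordT n (i, 0) = s(P n 0, P n (i+1)) := by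
  simp [chordT, chord]

lemma chordT_1 (i : ℕ) : chordT n (i, 1) = s(P n i, P n (n-1)) := by
  simp [chordT, chord]

lemma chordT_2 (i : ℕ) : chordT n (i, 2) = s(P n 0, P n (n-1)) := by
  simp [chordT, chord]

lemma chordT_not_mem_E₀ (h5 : 5 ≤ n) {z : ℕ × ℕ} (hz : z ∈ T n) :
    chordT n z ∉ E₀ n := by
  rw [mem_T] at hz
  obtain ⟨i, t⟩ := z
  simp only at hz
  intro hmem
  rcases hz with ⟨h1, h2, h3 | h3⟩ | ⟨h1, h3⟩ <;> subst h3
  · rw [chordT_0, s_mem_E₀_iff (by omega) (by omega) (by omega)] at hmem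
    omega
  · rw [chordT_1, s_mem_E₀_iff (by omega) (by omega) (by omega)] at hmem
    omega
  · rw [chordT_2, s_mem_E₀_iff (by omega) (by omega) (by omega)] at hmem
    omega

lemma hi_of_mem_T {z : ℕ × ℕ} (hz : z ∈ T n) : z.1 + 1 < n := by
  rw [mem_T] at hz
  omega

lemma NE_eq_pathEdges (h5 : 5 ≤ n) {z : ℕ × ℕ} (hz : z ∈ T n) :
    NE n z = pathEdges (Qp n z.1 (decide (z.2 ≠ 1)) (decide (z.2 ≠ 0)) (hi_of_mem_T hz)) := by
  rw [NE, pathEdges_Qp (by omega), chordT]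

lemma mem_E₀_hull (h5 : 5 ≤ n) {e : Sym2 (Fin n)} (he : e ∈ E₀ n) : IsHullEdge e := by
  rw [E₀, Finset.mem_erase] at he
  rw [hull_iff (by omega)]
  exact (mem_HE_iff e).mp he.2

lemma NE_NC (h5 : 5 ≤ n) {z : ℕ × ℕ} (hz : z ∈ T n) : IsNCPath (NE n z) := by
  constructor
  · exact ⟨_, NE_eq_pathEdges h5 hz⟩
  · intro e he f hf hc
    have hmem : ∀ g ∈ NE n z, IsHullEdge g ∨ g = chordT n z := by
      intro g hg
      rw [NE, Finset.mem_union, Finset.mem_erase, Finset.mem_singleton] at hg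
      rcases hg with ⟨_, hg⟩ | hg
      · exact Or.inl (mem_E₀_hull h5 hg)
      · exact Or.inr hg
    rcases hmem e he with h | rfl
    · exact not_crosses_of_hull (by omega) e f (Or.inl h) hc
    · rcases hmem f hf with h | rfl
      · exact not_crosses_of_hull (by omega) _ f (Or.inr h) hc
      · exact not_crosses_self _ hc

lemma NE_sdiff_left (h5 : 5 ≤ n) {z : ℕ × ℕ} (hz : z ∈ T n) :
    NE n z \ E₀ n = {chordT n z} := by
  ext x
  rw [Finset.mem_sdiff, NE, Finset.mem_union, Finset.mem_erase, Finset.mem_singleton]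
  constructor
  · rintro ⟨⟨_, h⟩ | h, hn⟩
    · exact absurd h hn
    · exact h
  · rintro rfl
    exact ⟨Or.inr rfl, chordT_not_mem_E₀ h5 hz⟩

lemma NE_sdiff_right (h5 : 5 ≤ n) {z : ℕ × ℕ} (hz : z ∈ T n) :
    E₀ n \ NE n z = {ek n z.1} := by
  have hi := hi_of_mem_T hz
  ext x
  rw [Finset.mem_sdiff, NE, Finset.mem_union, Finset.mem_erase, Finset.mem_singleton,
    Finset.mem_singleton]
  constructor
  · rintro ⟨hE, hn⟩
    by_contra hne
    exact hn (Or.inl ⟨hne, hE⟩)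
  · rintro rfl
    refine ⟨ek_mem_E₀ (by omega) hi, ?_⟩
    rintro (⟨h, _⟩ | h)
    · exact h rfl
    · exact chordT_not_mem_E₀ h5 hz (h ▸ ek_mem_E₀ (by omega) hi)

lemma chordT_ne_ek (h5 : 5 ≤ n) {z : ℕ × ℕ} (hz : z ∈ T n) :
    chordT n z ≠ ek n z.1 := by
  intro h
  exact chordT_not_mem_E₀ h5 hz (h ▸ ek_mem_E₀ (by omega) (hi_of_mem_T hz))

/-- candidates are adjacent to the canonical boundary path -/
lemma NE_adj (h5 : 5 ≤ n) (u : PVert n) (hu : u.1 = E₀ n) {z : ℕ × ℕ} (hz : z ∈ T n)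
    (w : PVert n) (hw : w.1 = NE n z) : (pathGraph n).Adj u w := by
  constructor
  · intro h
    apply chordT_not_mem_E₀ h5 hz
    have : chordT n z ∈ w.1 := by
      rw [hw, NE, Finset.mem_union]; right; exact Finset.mem_singleton_self _
    rw [← h, hu] at this
    exact this
  · rw [hu, hw, NE_sdiff_left h5 hz, NE_sdiff_right h5 hz, Finset.union_comm]
    rw [← Finset.insert_eq]
    exact Finset.card_pair (chordT_ne_ek h5 hz)

end PartE3

section PartE4
variable {n : ℕ} [NeZero n]

lemma adj_decomp (u w : PVert n) (h : (pathGraph n).Adj u w) :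
    ∃ e f, e ∈ u.1 ∧ f ∉ u.1 ∧ e ≠ f ∧ w.1 = u.1.erase e ∪ {f} := by
  classical
  obtain ⟨hne, hcard⟩ := h
  obtain ⟨p, hp⟩ := u.2.1
  obtain ⟨q, hq⟩ := w.2.1
  have hcu : u.1.card = n - 1 := by rw [hp, card_pathEdges]
  have hcw : w.1.card = n - 1 := by rw [hq, card_pathEdges]
  rw [Finset.card_union_of_disjoint disjoint_sdiff_sdiff] at hcard
  have h1 : (u.1 \ w.1).card + (u.1 ∩ w.1).card = n - 1 := by
    rw [Finset.card_sdiff_add_card_inter, hcu]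
  have h2 : (w.1 \ u.1).card + (w.1 ∩ u.1).card = n - 1 := by
    rw [Finset.card_sdiff_add_card_inter, hcw]
  have h3 : (u.1 ∩ w.1).card = (w.1 ∩ u.1).card := by rw [Finset.inter_comm]
  have e1 : (u.1 \ w.1).card = 1 := by omega
  have e2 : (w.1 \ u.1).card = 1 := by omega
  obtain ⟨e, he⟩ := Finset.card_eq_one.mp e1
  obtain ⟨f, hf⟩ := Finset.card_eq_one.mp e2
  have heu : e ∈ u.1 ∧ e ∉ w.1 := by
    have : e ∈ u.1 \ w.1 := by rw [he]; exact Finset.mem_singleton_self e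
    exact Finset.mem_sdiff.mp this
  have hfw : f ∈ w.1 ∧ f ∉ u.1 := by
    have : f ∈ w.1 \ u.1 := by rw [hf]; exact Finset.mem_singleton_self f
    exact Finset.mem_sdiff.mp this
  refine ⟨e, f, heu.1, hfw.2, fun hc => hfw.2 (hc ▸ heu.1), ?_⟩
  ext x
  rw [Finset.mem_union, Finset.mem_erase, Finset.mem_singleton]
  constructor
  · intro hx
    by_cases hxf : x = f
    · exact Or.inr hxf
    · left
      have hxu : x ∈ u.1 := by
        by_contra hxu
        have : x ∈ w.1 \ u.1 := Finset.mem_sdiff.mpr ⟨hx, hxu⟩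
        rw [hf, Finset.mem_singleton] at this
        exact hxf this
      exact ⟨fun hc => heu.2 (hc ▸ hx), hxu⟩
  · rintro (⟨hxe, hxu⟩ | rfl)
    · by_contra hxw
      have : x ∈ u.1 \ w.1 := Finset.mem_sdiff.mpr ⟨hxu, hxw⟩
      rw [he, Finset.mem_singleton] at this
      exact hxe this
    · exact hfw.1

lemma deg_constraint (h5 : 5 ≤ n) (u : PVert n) {i : ℕ} (hi : i + 1 < n)
    {f : Sym2 (Fin n)}
    (hu1 : u.1 = (E₀ n).erase (ek n i) ∪ {f}) (hf : f ∉ E₀ n) (w : Fin n) (hw : w ∈ f) :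
    w.val = 0 ∨ w.val = n - 1 ∨ w.val = i ∨ w.val = i + 1 := by
  classical
  by_contra hcon
  push_neg at hcon
  obtain ⟨h0, hn1, hii, hi1⟩ := hcon
  have hwn := w.isLt
  have m1 : ek n (w.val - 1) ∈ u.1 := by
    rw [hu1, Finset.mem_union, Finset.mem_erase]
    left
    refine ⟨?_, ek_mem_E₀ (by omega) (by omega)⟩
    rw [Ne, ek_inj (by omega) (by omega) (by omega)]; omega
  have m2 : ek n w.val ∈ u.1 := by
    rw [hu1, Finset.mem_union, Finset.mem_erase]
    left
    refine ⟨?_, ek_mem_E₀ (by omega) (by omega)⟩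
    rw [Ne, ek_inj (by omega) (by omega) (by omega)]; omega
  have m3 : f ∈ u.1 := by
    rw [hu1, Finset.mem_union]; right; exact Finset.mem_singleton_self f
  have w1 : w ∈ ek n (w.val - 1) := by
    rw [ek, Sym2.mem_iff]
    right
    rw [show w.val - 1 + 1 = w.val by omega, P_eq_self]
  have w2 : w ∈ ek n w.val := by
    rw [ek, Sym2.mem_iff]
    left
    rw [P_eq_self]
  have d12 : ek n (w.val - 1) ≠ ek n w.val := by
    rw [Ne, ek_inj (by omega) (by omega) (by omega)]; omega
  have d13 : ek n (w.val - 1) ≠ f := fun hc => hf (hc ▸ ek_mem_E₀ (by omega) (by omega))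
  have d23 : ek n w.val ≠ f := fun hc => hf (hc ▸ ek_mem_E₀ (by omega) (by omega))
  have hsub : ({ek n (w.val - 1), ek n w.val, f} : Finset _) ⊆
      u.1.filter (fun e => w ∈ e) := by
    intro x hx
    rw [Finset.mem_insert, Finset.mem_insert, Finset.mem_singleton] at hx
    rw [Finset.mem_filter]
    rcases hx with rfl | rfl | rfl
    · exact ⟨m1, w1⟩
    · exact ⟨m2, w2⟩
    · exact ⟨m3, hw⟩
  have hc3 : ({ek n (w.val - 1), ek n w.val, f} : Finset _).card = 3 := by
    rw [Finset.card_insert_of_notMem (by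
      rw [Finset.mem_insert, Finset.mem_singleton]; push_neg; exact ⟨d12, d13⟩),
      Finset.card_insert_of_notMem (by rw [Finset.mem_singleton]; exact d23),
      Finset.card_singleton]
  obtain ⟨q, hq⟩ := u.2.1
  have hdeg : degIn u.1 w ≤ 2 := by rw [hq]; exact degIn_pathEdges_le_two q w
  have : 3 ≤ (u.1.filter (fun e => w ∈ e)).card := hc3 ▸ Finset.card_le_card hsub
  rw [degIn] at hdeg
  omega

lemma closing_prefix (h5 : 5 ≤ n) (u : PVert n) {i : ℕ} (hi : i + 1 < n)
    (hu1 : u.1 = (E₀ n).erase (ek n i) ∪ {s(P n 0, P n i)}) : False := by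
  obtain ⟨q, hq⟩ := u.2.1
  have hconst := pathEdges_const q (Nat.pos_of_ne_zero (NeZero.ne n))
    (fun z => z.val ≤ i) ?_ (P n 0) (P n (n-1))
  · rw [P_val (by omega), P_val (by omega)] at hconst
    have := hconst.mp (by omega)
    omega
  · intro x y hxy
    rw [← hq, hu1, Finset.mem_union, Finset.mem_erase, Finset.mem_singleton] at hxy
    rcases hxy with ⟨hne, hmem⟩ | hch
    · obtain ⟨k, hk, hek⟩ := (mem_E₀ (by omega) _).mp hmem
      have hki : k ≠ i := by
        intro hc
        exact hne (by rw [hek, hc])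
      rw [ek, ← P_eq_self x, ← P_eq_self y,
        sym_P_eq (by omega) x.isLt y.isLt (by omega) (by omega)] at hek
      show x.val ≤ i ↔ y.val ≤ i
      omega
    · rw [← P_eq_self x, ← P_eq_self y,
        sym_P_eq (by omega) x.isLt y.isLt (by omega) (by omega)] at hch
      show x.val ≤ i ↔ y.val ≤ i
      omega

lemma closing_suffix (h5 : 5 ≤ n) (u : PVert n) {i : ℕ} (hi : i + 1 < n)
    (hu1 : u.1 = (E₀ n).erase (ek n i) ∪ {s(P n (i+1), P n (n-1))}) : False := by
  obtain ⟨q, hq⟩ := u.2.1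
  have hconst := pathEdges_const q (Nat.pos_of_ne_zero (NeZero.ne n))
    (fun z => i + 1 ≤ z.val) ?_ (P n 0) (P n (n-1))
  · rw [P_val (by omega), P_val (by omega)] at hconst
    have := hconst.mpr (by omega)
    omega
  · intro x y hxy
    rw [← hq, hu1, Finset.mem_union, Finset.mem_erase, Finset.mem_singleton] at hxy
    rcases hxy with ⟨hne, hmem⟩ | hch
    · obtain ⟨k, hk, hek⟩ := (mem_E₀ (by omega) _).mp hmem
      have hki : k ≠ i := by
        intro hc
        exact hne (by rw [hek, hc])
      rw [ek, ← P_eq_self x, ← P_eq_self y,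
        sym_P_eq (by omega) x.isLt y.isLt (by omega) (by omega)] at hek
      show i + 1 ≤ x.val ↔ i + 1 ≤ y.val
      omega
    · rw [← P_eq_self x, ← P_eq_self y,
        sym_P_eq (by omega) x.isLt y.isLt (by omega) (by omega)] at hch
      show i + 1 ≤ x.val ↔ i + 1 ≤ y.val
      omega

end PartE4

section PartE5
variable {n : ℕ} [NeZero n]

lemma classify (h5 : 5 ≤ n) (w : PVert n) {i : ℕ} (hi : i + 1 < n) (x y : Fin n)
    (hlt : x.val < y.val)
    (hx4 : x.val = 0 ∨ x.val = n - 1 ∨ x.val = i ∨ x.val = i + 1)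
    (hy4 : y.val = 0 ∨ y.val = n - 1 ∨ y.val = i ∨ y.val = i + 1)
    (hfE : ¬(x.val + 1 = y.val ∨ y.val + 1 = x.val))
    (hw1 : w.1 = (E₀ n).erase (ek n i) ∪ {s(x, y)}) :
    ∃ z ∈ T n, w.1 = NE n z := by
  have hxv := x.isLt
  have hyv := y.isLt
  have hrw : ∀ A B : ℕ, x.val = A → y.val = B → s(x, y) = s(P n A, P n B) := by
    intro A B hA hB
    conv_lhs => rw [← P_eq_self x, ← P_eq_self y]
    rw [hA, hB]
  rcases hx4 with hx | hx | hx | hx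
  · -- x = 0
    rcases hy4 with hy | hy | hy | hy
    · omega
    · -- y = n-1 : the C-chord
      refine ⟨(i, 2), (mem_T _).mpr (by omega), ?_⟩
      rw [hw1, NE, chordT_2, hrw 0 (n-1) hx hy]
    · -- y = i : closes the prefix
      exact absurd (by rw [hw1, hrw 0 i hx hy] :
        w.1 = (E₀ n).erase (ek n i) ∪ {s(P n 0, P n i)})
        (fun hc => closing_prefix h5 w hi hc)
    · -- y = i+1
      have hipos : 0 < i := by omega
      rcases Nat.lt_or_ge i (n-2) with hcase | hcase
      · refine ⟨(i, 0), (mem_T _).mpr (by omega), ?_⟩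
        rw [hw1, NE, chordT_0, hrw 0 (i+1) hx hy]
      · have hieq : i + 1 = n - 1 := by omega
        refine ⟨(i, 2), (mem_T _).mpr (by omega), ?_⟩
        rw [hw1, NE, chordT_2, hrw 0 (i+1) hx hy, hieq]
  · omega
  · -- x = i
    rcases hy4 with hy | hy | hy | hy
    · omega
    · -- y = n-1 : the B-chord
      have hin2 : i < n - 2 := by omega
      rcases Nat.eq_zero_or_pos i with hi0 | hipos
      · refine ⟨(i, 2), (mem_T _).mpr (by omega), ?_⟩
        rw [hw1, NE, chordT_2, hrw i (n-1) hx hy, hi0]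
      · refine ⟨(i, 1), (mem_T _).mpr (by omega), ?_⟩
        rw [hw1, NE, chordT_1, hrw i (n-1) hx hy]
    · omega
    · omega
  · -- x = i+1
    rcases hy4 with hy | hy | hy | hy
    · omega
    · -- y = n-1 : closes the suffix
      exact absurd (by rw [hw1, hrw (i+1) (n-1) hx hy] :
        w.1 = (E₀ n).erase (ek n i) ∪ {s(P n (i+1), P n (n-1))})
        (fun hc => closing_suffix h5 w hi hc)
    · omega
    · omega

lemma neighbor_char (h5 : 5 ≤ n) (u w : PVert n) (hu : u.1 = E₀ n)
    (hadj : (pathGraph n).Adj u w) : ∃ z ∈ T n, w.1 = NE n z := by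
  obtain ⟨e, f, heu, hfu, hef, hw1⟩ := adj_decomp u w hadj
  rw [hu] at heu hfu hw1
  obtain ⟨i, hi, rfl⟩ := (mem_E₀ (by omega) e).mp heu
  obtain ⟨q, hq⟩ := w.2.1
  have hfw : f ∈ pathEdges q := by
    rw [← hq, hw1, Finset.mem_union]
    right
    exact Finset.mem_singleton_self f
  obtain ⟨x, y, hxy, rfl⟩ := proper_edge q f hfw
  have hx4 := deg_constraint h5 w hi hw1 hfu x (Sym2.mem_iff.mpr (Or.inl rfl))
  have hy4 := deg_constraint h5 w hi hw1 hfu y (Sym2.mem_iff.mpr (Or.inr rfl))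
  have hvne : x.val ≠ y.val := fun h => hxy (Fin.ext h)
  have hfE : ¬(x.val + 1 = y.val ∨ y.val + 1 = x.val) := by
    intro hcon
    apply hfu
    have := (s_mem_E₀_iff (by omega) x.isLt y.isLt).mpr hcon
    rwa [P_eq_self, P_eq_self] at this
  rcases Nat.lt_or_ge x.val y.val with hlt | hge
  · exact classify h5 w hi x y hlt hx4 hy4 hfE hw1
  · have hlt : y.val < x.val := by omega
    exact classify h5 w hi y x hlt hy4 hx4 (by omega)
      (by rw [hw1, Sym2.eq_swap])

end PartE5

section Final
variable {n : ℕ} [NeZero n]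

lemma NE_injOn (h5 : 5 ≤ n) {z1 z2 : ℕ × ℕ} (hz1 : z1 ∈ T n) (hz2 : z2 ∈ T n)
    (h : NE n z1 = NE n z2) : z1 = z2 := by
  have hi1 := hi_of_mem_T hz1
  have hi2 := hi_of_mem_T hz2
  have hek : ek n z1.1 = ek n z2.1 := by
    have := NE_sdiff_right h5 hz1
    rw [h, NE_sdiff_right h5 hz2] at this
    exact (Finset.singleton_injective this).symm
  have hieq : z1.1 = z2.1 := (ek_inj (by omega) (by omega) (by omega)).mp hek
  have hch : chordT n z1 = chordT n z2 := by
    have := NE_sdiff_left h5 hz1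
    rw [h, NE_sdiff_left h5 hz2] at this
    exact (Finset.singleton_injective this).symm
  obtain ⟨i1, t1⟩ := z1
  obtain ⟨i2, t2⟩ := z2
  simp only at hieq
  subst hieq
  rw [mem_T] at hz1 hz2
  simp only [Prod.mk.injEq, true_and]
  simp only at hz1 hz2
  have ht1 : t1 = 0 ∨ t1 = 1 ∨ t1 = 2 := by omega
  have ht2 : t2 = 0 ∨ t2 = 1 ∨ t2 = 2 := by omega
  have hb : 0 < n - 1 := by omega
  rcases ht1 with rfl | rfl | rfl <;> rcases ht2 with rfl | rfl | rfl
  · rfl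
  · rw [chordT_0, chordT_1, sym_P_eq (by omega) (by omega) (by omega) (by omega) (by omega)]
      at hch
    omega
  · rw [chordT_0, chordT_2, sym_P_eq (by omega) (by omega) (by omega) (by omega) (by omega)]
      at hch
    omega
  · rw [chordT_1, chordT_0, sym_P_eq (by omega) (by omega) (by omega) (by omega) (by omega)]
      at hch
    omega
  · rfl
  · rw [chordT_1, chordT_2, sym_P_eq (by omega) (by omega) (by omega) (by omega) (by omega)]
      at hch
    omega
  · rw [chordT_2, chordT_0, sym_P_eq (by omega) (by omega) (by omega) (by omega) (by omega)]
      at hch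
    omega
  · rw [chordT_2, chordT_1, sym_P_eq (by omega) (by omega) (by omega) (by omega) (by omega)]
      at hch
    omega
  · rfl

lemma degree_canonical (h5 : 5 ≤ n) (u : PVert n) (hu : u.1 = E₀ n) :
    (pathGraph n).degree u = 3 * n - 7 := by
  classical
  unfold SimpleGraph.degree
  have hbij : ((pathGraph n).neighborFinset u).card = ((T n).image (NE n)).card := by
    apply Finset.card_bij (fun w _ => w.1)
    · intro w hw
      rw [SimpleGraph.mem_neighborFinset] at hw
      obtain ⟨z, hz, hwz⟩ := neighbor_char h5 u w hu hw
      rw [Finset.mem_image]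
      exact ⟨z, hz, hwz.symm⟩
    · intro w1 h1 w2 h2 hw
      exact Subtype.ext hw
    · intro E hE
      rw [Finset.mem_image] at hE
      obtain ⟨z, hz, rfl⟩ := hE
      refine ⟨(⟨NE n z, NE_NC h5 hz⟩ : PVert n), ?_, rfl⟩
      exact (SimpleGraph.mem_neighborFinset _ _ _).mpr (NE_adj h5 u hu hz _ rfl)
  rw [hbij, Finset.card_image_of_injOn (fun z1 hz1 z2 hz2 h => NE_injOn h5 hz1 hz2 h),
    card_T h5]

lemma HE_rot (r : Fin n) : (HE n).image (rotE r) = HE n := by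
  rw [HE, Finset.image_image]
  have h1 : ((rotE r) ∘ (fun k : Fin n => s(k, k+1))) =
      (fun k : Fin n => s(k, k+1)) ∘ (fun k : Fin n => k + r) := by
    funext k
    show rotE r s(k, k+1) = s(k + r, (k + r) + 1)
    rw [rotE_pair]
    congr 1
    abel
  rw [h1, ← Finset.image_image]
  have h2 : (Finset.univ : Finset (Fin n)).image (fun k => k + r) = Finset.univ := by
    apply Finset.image_univ_of_surjective
    intro t
    exact ⟨t - r, by abel⟩
  rw [h2]

end Final





/-- In `G(P)` with `n ≥ 5` points in convex position, every boundary path has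
degree exactly `3n - 7`. -/
theorem boundary_degree (n : ℕ) (hn : 5 ≤ n) (v : PVert n) (hv : IsBoundary v) :
    (pathGraph n).degree v = 3 * n - 7 := by
  haveI : NeZero n := ⟨by omega⟩
  obtain ⟨a, hva⟩ := boundary_structure (by omega) v hv
  set r : Fin n := P n (n-1) - a with hr
  rw [← rotV_degree r v]
  apply degree_canonical hn
  show v.1.image (rotE r) = E₀ n
  rw [hva, Finset.image_erase (rotE_inj r), HE_rot, rotE_pair]
  have h1 : a + r = P n (n-1) := by rw [hr]; abel
  have h2 : (a + 1) + r = P n (n-1) + 1 := by rw [← h1]; abel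
  rw [h1, h2, E₀, ek_eq_hullgen]

end PG
end

section
/- Every non-crossing spanning path v of a convex point set that contains at least one diagonal has a neighbor u in the path graph G(P) such that the number of diagonals in u is one less than the number of diagonals in v. -/
namespace PG

lemma m2 {n y : ℕ} (hn : 0 < n) (h : y < 2*n) :
    (y < n ∧ y % n = y) ∨ (n ≤ y ∧ y % n = y - n) := by
  rcases lt_or_ge y n with h'|h'
  · exact Or.inl ⟨h', Nat.mod_eq_of_lt h'⟩
  · right; refine ⟨h', ?_⟩
    rw [Nat.mod_eq_sub_mod h', Nat.mod_eq_of_lt (by omega)]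

lemma dInj {n x y a : ℕ} (ha : a < n) (hx : x < n) (hy : y < n)
    (h : (x + n - a) % n = (y + n - a) % n) : x = y := by
  have h1 := m2 (n := n) (y := x + n - a) (by omega) (by omega)
  have h2 := m2 (n := n) (y := y + n - a) (by omega) (by omega)
  omega

lemma dAdd {n a c : ℕ} (ha : a < n) (hc : c < n) : ((a + c) % n + n - a) % n = c := by
  have h1 := m2 (n := n) (y := a + c) (by omega) (by omega)
  set u := (a + c) % n with hu
  have h2 := m2 (n := n) (y := u + n - a) (by omega) (by omega)
  omega

lemma dSolve {n x a c : ℕ} (ha : a < n) (hx : x < n) (hc : c < n)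
    (h : (x + n - a) % n = c) : x = (a + c) % n := by
  refine dInj ha hx (Nat.mod_lt _ (by omega)) ?_
  rw [h, dAdd ha hc]

lemma dSucc {n x y a : ℕ} (ha : a < n) (hx : x < n) (hy : y < n) :
    (x + 1) % n = y ↔ (y + n - a) % n = ((x + n - a) % n + 1) % n := by
  have h1 := m2 (n := n) (y := x + n - a) (by omega) (by omega)
  set u := (x + n - a) % n with hu
  have h2 := m2 (n := n) (y := u + 1) (by omega) (by omega)
  have h3 := m2 (n := n) (y := x + 1) (by omega) (by omega)
  have h4 := m2 (n := n) (y := y + n - a) (by omega) (by omega)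
  omega

lemma hull_iff_s9 {n : ℕ} (u v : Fin n) :
    IsHullEdge s(u, v) ↔ ((u.val + 1) % n = v.val ∨ (v.val + 1) % n = u.val) := by
  constructor
  · rintro ⟨a, b, hab, h⟩
    rw [Sym2.eq_iff] at hab
    rcases hab with ⟨h1, h2⟩|⟨h1, h2⟩ <;> subst h1 <;> subst h2 <;> tauto
  · intro h; exact ⟨u, v, rfl, h⟩

lemma mem_pathEdges {n : ℕ} (p : Equiv.Perm (Fin n)) (e : Sym2 (Fin n)) :
    e ∈ pathEdges p ↔ ∃ i : ℕ, ∃ h : i + 1 < n,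
      e = s(p ⟨i, by omega⟩, p ⟨i + 1, h⟩) := by
  simp only [pathEdges, Finset.mem_filter, Finset.mem_univ, true_and]
  constructor
  · rintro ⟨i, j, rfl, hj⟩
    refine ⟨i.val, by omega, ?_⟩
    have hji : j = ⟨i.val + 1, by omega⟩ := Fin.ext hj
    exact congrArg₂ (fun a b => s(p a, p b)) rfl hji
  · rintro ⟨i, h, rfl⟩
    exact ⟨⟨i, by omega⟩, ⟨i + 1, h⟩, rfl, rfl⟩

lemma edge_inj {n : ℕ} (p : Equiv.Perm (Fin n)) {i j : ℕ} (hi : i + 1 < n) (hj : j + 1 < n)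
    (h : s(p ⟨i, by omega⟩, p ⟨i + 1, hi⟩) = s(p ⟨j, by omega⟩, p ⟨j + 1, hj⟩)) : i = j := by
  rw [Sym2.eq_iff] at h
  rcases h with ⟨h1, h2⟩|⟨h1, h2⟩ <;>
  · have e1 : _ = _ := congrArg Fin.val (p.injective h1)
    have e2 : _ = _ := congrArg Fin.val (p.injective h2)
    simp only [Fin.val_mk] at e1 e2
    omega

lemma ivt {P : ℕ → Prop} (j i : ℕ) (hij : i < j) (h : ¬ (P i ↔ P j)) :
    ∃ t, i ≤ t ∧ t < j ∧ ¬ (P t ↔ P (t + 1)) := by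
  induction j with
  | zero => omega
  | succ j ih =>
    by_cases hj : i = j
    · subst hj; exact ⟨i, le_refl _, by omega, h⟩
    · by_cases hpj : P j ↔ P (j + 1)
      · obtain ⟨t, h1, h2, h3⟩ := ih (by omega) (by tauto)
        exact ⟨t, h1, by omega, h3⟩
      · exact ⟨j, by omega, by omega, hpj⟩

lemma not_crosses_of_hull_right {n : ℕ} {e f : Sym2 (Fin n)} (hf : IsHullEdge f) :
    ¬ Crosses e f := by
  rintro ⟨a, b, c, d, he, hf', hab, hcd, hac, had, hbc, hbd, hx⟩
  obtain ⟨x, y, hxy, hadj⟩ := hf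
  rw [hf', Sym2.eq_iff] at hxy
  have hadj' : (c.val + 1) % n = d.val ∨ (d.val + 1) % n = c.val := by
    rcases hxy with ⟨h1, h2⟩|⟨h1, h2⟩ <;> subst h1 <;> subst h2 <;> tauto
  have ha := a.isLt; have hb := b.isLt; have hc := c.isLt; have hd := d.isLt
  have hn : 0 < n := by omega
  have vab : a.val ≠ b.val := fun h => hab (Fin.ext h)
  have vcd : c.val ≠ d.val := fun h => hcd (Fin.ext h)
  have vac : a.val ≠ c.val := fun h => hac (Fin.ext h)
  have vad : a.val ≠ d.val := fun h => had (Fin.ext h)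
  have vbc : b.val ≠ c.val := fun h => hbc (Fin.ext h)
  have vbd : b.val ≠ d.val := fun h => hbd (Fin.ext h)
  -- delta coordinates
  have key : ∀ z : Fin n, z.val ≠ a.val → (z.val + n - a.val) % n ≠ 0 := by
    intro z hz h0
    have : (z.val + n - a.val) % n = (a.val + n - a.val) % n := by
      rw [h0, show a.val + n - a.val = n by omega, Nat.mod_self]
    exact hz (dInj ha z.isLt ha this)
  have kc := key c vac.symm
  have kd := key d vad.symm
  have kbc : (c.val + n - a.val) % n ≠ (b.val + n - a.val) % n :=
    fun h => vbc.symm (dInj ha c.isLt b.isLt h)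
  have kbd : (d.val + n - a.val) % n ≠ (b.val + n - a.val) % n :=
    fun h => vbd.symm (dInj ha d.isLt b.isLt h)
  rcases hadj' with h1|h1
  · rw [dSucc (a := a.val) ha c.isLt d.isLt] at h1
    have h2 := m2 (n := n) (y := (c.val + n - a.val) % n + 1)
      (by omega) (by have := Nat.mod_lt (c.val + n - a.val) hn; omega)
    have h3 := Nat.mod_lt (c.val + n - a.val) hn
    have h4 := Nat.mod_lt (d.val + n - a.val) hn
    have h5 := Nat.mod_lt (b.val + n - a.val) hn
    omega
  · rw [dSucc (a := a.val) ha d.isLt c.isLt] at h1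
    have h2 := m2 (n := n) (y := (d.val + n - a.val) % n + 1)
      (by omega) (by have := Nat.mod_lt (d.val + n - a.val) hn; omega)
    have h3 := Nat.mod_lt (c.val + n - a.val) hn
    have h4 := Nat.mod_lt (d.val + n - a.val) hn
    have h5 := Nat.mod_lt (b.val + n - a.val) hn
    omega

lemma not_crosses_of_hull_left {n : ℕ} {e f : Sym2 (Fin n)} (he : IsHullEdge e) :
    ¬ Crosses e f := by
  rintro ⟨a, b, c, d, he', hf', hab, hcd, hac, had, hbc, hbd, hx⟩
  obtain ⟨x, y, hxy, hadj⟩ := he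
  rw [he', Sym2.eq_iff] at hxy
  have hadj' : (a.val + 1) % n = b.val ∨ (b.val + 1) % n = a.val := by
    rcases hxy with ⟨h1, h2⟩|⟨h1, h2⟩ <;> subst h1 <;> subst h2 <;> tauto
  have ha := a.isLt; have hb := b.isLt; have hc := c.isLt; have hd := d.isLt
  have hn : 0 < n := by omega
  have key : ∀ z : Fin n, z ≠ a → (z.val + n - a.val) % n ≠ 0 := by
    intro z hz h0
    have : (z.val + n - a.val) % n = (a.val + n - a.val) % n := by
      rw [h0, show a.val + n - a.val = n by omega, Nat.mod_self]
    exact hz (Fin.ext (dInj ha z.isLt ha this))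
  have kc := key c (Ne.symm hac)
  have kd := key d (Ne.symm had)
  have kb := key b (Ne.symm hab)
  have kbc : (c.val + n - a.val) % n ≠ (b.val + n - a.val) % n :=
    fun h => hbc (Fin.ext (dInj ha b.isLt c.isLt h.symm))
  have kbd : (d.val + n - a.val) % n ≠ (b.val + n - a.val) % n :=
    fun h => hbd (Fin.ext (dInj ha b.isLt d.isLt h.symm))
  have h3 := Nat.mod_lt (c.val + n - a.val) hn
  have h4 := Nat.mod_lt (d.val + n - a.val) hn
  have h5 := Nat.mod_lt (b.val + n - a.val) hn
  rcases hadj' with h1|h1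
  · -- b = a + 1, so M = 1
    have hM : (b.val + n - a.val) % n = 1 := by
      have : b.val = (a.val + 1) % n := h1.symm
      rw [this, dAdd ha (by omega)]
    omega
  · -- a = b + 1, so M = n - 1
    rw [dSucc (a := a.val) ha b.isLt a.isLt] at h1
    rw [show (a.val + n - a.val) % n = 0 by
      rw [show a.val + n - a.val = n by omega, Nat.mod_self]] at h1
    have h2 := m2 (n := n) (y := (b.val + n - a.val) % n + 1) (by omega) (by omega)
    omega


lemma cross_core {n : ℕ} (p : Equiv.Perm (Fin n))
    (hnc : ∀ e ∈ pathEdges p, ∀ f ∈ pathEdges p, ¬ Crosses e f)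
    {k i j : ℕ} (hk : k + 1 < n) (hi : i < k) (hj : j < k)
    (h : ¬ ((((p ⟨i, by omega⟩).val + n - (p ⟨k+1, hk⟩).val) % n <
             ((p ⟨k, by omega⟩).val + n - (p ⟨k+1, hk⟩).val) % n) ↔
            (((p ⟨j, by omega⟩).val + n - (p ⟨k+1, hk⟩).val) % n <
             ((p ⟨k, by omega⟩).val + n - (p ⟨k+1, hk⟩).val) % n))) :
    False := by
  have hn : 0 < n := by omega
  set A := (p ⟨k+1, hk⟩).val with hA
  set M := ((p ⟨k, by omega⟩).val + n - A) % n with hM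
  set P : ℕ → Prop := fun t => ((p ⟨t % n, Nat.mod_lt _ hn⟩).val + n - A) % n < M with hP
  have Pdef : ∀ t (ht : t < n), P t ↔ (((p ⟨t, ht⟩).val + n - A) % n < M) := by
    intro t ht
    have : (⟨t % n, Nat.mod_lt _ hn⟩ : Fin n) = ⟨t, ht⟩ := Fin.ext (Nat.mod_eq_of_lt ht)
    simp only [hP]; rw [this]
  -- a crossing from any adjacent sign change
  have crossing : ∀ t, t + 1 < k → ¬ (P t ↔ P (t+1)) → False := by
    intro t ht hPt
    have e1 : s(p ⟨k, by omega⟩, p ⟨k+1, hk⟩) ∈ pathEdges p :=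
      (mem_pathEdges p _).2 ⟨k, hk, rfl⟩
    have e2 : s(p ⟨t, by omega⟩, p ⟨t+1, by omega⟩) ∈ pathEdges p :=
      (mem_pathEdges p _).2 ⟨t, by omega, rfl⟩
    refine hnc _ e1 _ e2 ?_
    refine ⟨p ⟨k+1, hk⟩, p ⟨k, by omega⟩, p ⟨t, by omega⟩, p ⟨t+1, by omega⟩,
      Sym2.eq_swap, rfl, ?_, ?_, ?_, ?_, ?_, ?_, ?_⟩
    · exact fun hq => by have : _ = _ := congrArg Fin.val (p.injective hq); simp only [Fin.val_mk] at this; omega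
    · exact fun hq => by have : _ = _ := congrArg Fin.val (p.injective hq); simp only [Fin.val_mk] at this; omega
    · exact fun hq => by have : _ = _ := congrArg Fin.val (p.injective hq); simp only [Fin.val_mk] at this; omega
    · exact fun hq => by have : _ = _ := congrArg Fin.val (p.injective hq); simp only [Fin.val_mk] at this; omega
    · exact fun hq => by have : _ = _ := congrArg Fin.val (p.injective hq); simp only [Fin.val_mk] at this; omega
    · exact fun hq => by have : _ = _ := congrArg Fin.val (p.injective hq); simp only [Fin.val_mk] at this; omega
    · rw [Pdef t (by omega), Pdef (t+1) (by omega)] at hPt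
      constructor
      · intro h1 h2; exact hPt ⟨fun _ => h2, fun _ => h1⟩
      · intro h1; by_contra h2
        exact hPt ⟨fun h3 => absurd h3 (by tauto), fun h3 => absurd h3 (by tauto)⟩
  rw [← Pdef i (by omega), ← Pdef j (by omega)] at h
  rcases Nat.lt_trichotomy i j with hij | hij | hij
  · obtain ⟨t, h1, h2, h3⟩ := ivt j i hij h
    exact crossing t (by omega) h3
  · exact h (by rw [hij])
  · obtain ⟨t, h1, h2, h3⟩ := ivt i j hij (by tauto)
    exact crossing t (by omega) h3


lemma finmk {n a b : ℕ} (ha : a < n) (hb : b < n) (h : a = b) :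
    (⟨a, ha⟩ : Fin n) = ⟨b, hb⟩ := by subst h; rfl

lemma zeroD {n A : ℕ} (hA : A < n) : (A + n - A) % n = 0 := by
  rw [show A + n - A = n by omega, Nat.mod_self]

lemma two_step {P : ℕ → Prop} (h0 : P 0) (h1 : P 1)
    (hstep : ∀ t, P t → P (t + 1) → P (t + 2)) : ∀ t, P t := by
  intro t
  induction t using Nat.strong_induction_on with
  | _ t ih =>
    rcases t with _ | t
    · exact h0
    rcases t with _ | t
    · exact h1
    · exact hstep t (ih t (by omega)) (ih (t + 1) (by omega))

lemma inv1 {n x a : ℕ} (ha : a < n) (hx : x < n) :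
    x = (a + (n - 1)) % n ↔ (x + 1) % n = a := by
  have h1 := m2 (n := n) (y := a + (n - 1)) (by omega) (by omega)
  have h2 := m2 (n := n) (y := x + 1) (by omega) (by omega)
  omega

section W

variable {n : ℕ} (p : Equiv.Perm (Fin n)) (w : ℕ → ℕ)
  (hw : ∀ i (hi : i < n), w i = (p ⟨i, hi⟩).val)

include hw

lemma wlt : ∀ i, i < n → w i < n := by
  intro i hi; rw [hw i hi]; exact Fin.isLt _

lemma winj : ∀ i j, i < n → j < n → w i = w j → i = j := by
  intro i j hi hj h
  rw [hw i hi, hw j hj] at h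
  have := p.injective (Fin.ext h)
  have : _ = _ := congrArg Fin.val this
  simpa using this

lemma suffixA (k : ℕ) (hk : k + 1 < n)
    (hrun : ∀ j, j + 1 < n → k < j → (w j + 1) % n = w (j + 1) ∨ (w (j + 1) + 1) % n = w j)
    (hfirst : k + 2 < n → (w (k + 2) + n - w (k + 1)) % n = 1) :
    ∀ t, k + 1 + t < n → (w (k + 1 + t) + n - w (k + 1)) % n = t := by
  intro t
  induction t using Nat.strong_induction_on with
  | _ t ih =>
    intro h
    have hA : w (k + 1) < n := wlt p w hw _ (by omega)
    rcases t with _ | t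
    · exact zeroD hA
    rcases t with _ | t
    · exact hfirst (by omega)
    · -- t + 2 case
      have IH1 := ih (t + 1) (by omega) (by omega)
      have IH2 := ih t (by omega) (by omega)
      have hxl : w (k + 1 + (t + 1)) < n := wlt p w hw _ (by omega)
      have hyl : w (k + 1 + (t + 2)) < n := wlt p w hw _ (by omega)
      have hull := hrun (k + 1 + (t + 1)) (by omega) (by omega)
      rw [show k + 1 + (t + 1) + 1 = k + 1 + (t + 2) by omega] at hull
      rcases hull with h1 | h1
      · rw [dSucc (a := w (k + 1)) hA hxl hyl] at h1
        rw [h1, IH1, Nat.mod_eq_of_lt (by omega)]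
      · rw [dSucc (a := w (k + 1)) hA hyl hxl] at h1
        have hyd : (w (k + 1 + (t + 2)) + n - w (k + 1)) % n < n := Nat.mod_lt _ (by omega)
        have h2 := m2 (n := n) (y := (w (k + 1 + (t + 2)) + n - w (k + 1)) % n + 1)
          (by omega) (by omega)
        have hne : (w (k + 1 + (t + 2)) + n - w (k + 1)) % n ≠ t := by
          intro hEq
          have : w (k + 1 + (t + 2)) = w (k + 1 + t) :=
            dInj hA hyl (wlt p w hw _ (by omega)) (by rw [hEq, IH2])
          have := winj p w hw _ _ (by omega) (by omega) this
          omega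
        omega

lemma suffixB (k : ℕ) (hk : k + 1 < n)
    (hrun : ∀ j, j + 1 < n → k < j → (w j + 1) % n = w (j + 1) ∨ (w (j + 1) + 1) % n = w j)
    (hfirst : k + 2 < n → (w (k + 2) + n - w (k + 1)) % n = n - 1) :
    ∀ t, k + 1 + t < n → (w (k + 1 + t) + n - w (k + 1)) % n = (n - t) % n := by
  have hA : w (k + 1) < n := wlt p w hw _ (by omega)
  refine two_step ?_ ?_ ?_
  · intro h
    have e : w (k + 1 + 0) = w (k + 1) := congrArg w (by omega)
    rw [e, zeroD hA, Nat.sub_zero, Nat.mod_self]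
  · intro h
    have e : w (k + 1 + 1) = w (k + 2) := congrArg w (by omega)
    rw [e, hfirst (by omega), Nat.mod_eq_of_lt (show n - 1 < n by omega)]
  · intro t ht ht1 h
    have IH1 := ht1 (by omega)
    have IH2 := ht (by omega)
    rw [show (n - (t + 1)) % n = n - (t + 1) from Nat.mod_eq_of_lt (by omega)] at IH1
    have hxl : w (k + 1 + (t + 1)) < n := wlt p w hw _ (by omega)
    have hyl : w (k + 1 + (t + 2)) < n := wlt p w hw _ (by omega)
    have hull := hrun (k + 1 + (t + 1)) (by omega) (by omega)
    have e : w (k + 1 + (t + 1) + 1) = w (k + 1 + (t + 2)) := congrArg w (by omega)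
    rw [e] at hull
    rw [show (n - (t + 2)) % n = n - (t + 2) from Nat.mod_eq_of_lt (by omega)]
    rcases hull with h1 | h1
    · exfalso
      rw [dSucc (a := w (k + 1)) hA hxl hyl, IH1] at h1
      have h0 : (w (k + 1 + (t + 2)) + n - w (k + 1)) % n = (n - t) % n := by
        rw [h1, show n - (t + 1) + 1 = n - t by omega]
      have : w (k + 1 + (t + 2)) = w (k + 1 + t) :=
        dInj hA hyl (wlt p w hw _ (by omega)) (by rw [h0, IH2])
      have := winj p w hw _ _ (by omega) (by omega) this
      omega
    · rw [dSucc (a := w (k + 1)) hA hyl hxl, IH1] at h1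
      have hyd : (w (k + 1 + (t + 2)) + n - w (k + 1)) % n < n := Nat.mod_lt _ (by omega)
      have h2 := m2 (n := n) (y := (w (k + 1 + (t + 2)) + n - w (k + 1)) % n + 1)
        (by omega) (by omega)
      omega

lemma cross_core_w (hnc : ∀ e ∈ pathEdges p, ∀ f ∈ pathEdges p, ¬ Crosses e f)
    {k i j : ℕ} (hk : k + 1 < n) (hi : i < k) (hj : j < k)
    (h : ¬ (((w i + n - w (k+1)) % n < (w k + n - w (k+1)) % n) ↔
            ((w j + n - w (k+1)) % n < (w k + n - w (k+1)) % n))) : False := by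
  apply cross_core p hnc hk hi hj
  rw [← hw i (by omega), ← hw j (by omega), ← hw k (by omega), ← hw (k+1) hk]
  exact h

lemma keyA (hnc : ∀ e ∈ pathEdges p, ∀ f ∈ pathEdges p, ¬ Crosses e f)
    (k : ℕ) (hk : k + 1 < n)
    (hsuf : ∀ t, k + 1 + t < n → (w (k + 1 + t) + n - w (k + 1)) % n = t)
    (hd1 : (w k + 1) % n ≠ w (k + 1))
    (hd2 : (w (k + 1) + 1) % n ≠ w k) :
    (w k + n - w (k + 1)) % n = n - 1 - k := by
  have hA : w (k + 1) < n := wlt p w hw _ (by omega)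
  have hK : w k < n := wlt p w hw _ (by omega)
  set M := (w k + n - w (k + 1)) % n with hM
  have hMlt : M < n := Nat.mod_lt _ (by omega)
  have hM0 : M ≠ 0 := by
    intro h
    have : w k = w (k + 1) := dInj hA hK hA (by rw [← hM, h, zeroD hA])
    have := winj p w hw _ _ (by omega) (by omega) this
    omega
  have hM1 : M ≠ 1 := by
    intro h
    exact hd2 (dSolve hA hK (by omega) (by rw [← hM, h])).symm
  have hMn1 : M ≠ n - 1 := by
    intro h
    have : w k = (w (k + 1) + (n - 1)) % n := dSolve hA hK (by omega) (by rw [← hM, h])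
    exact hd1 ((inv1 hA hK).1 this)
  have hMm : ∀ t, t < n - 1 - k → M ≠ t := by
    intro t htm h
    have h2 := hsuf t (by omega)
    have : w k = w (k + 1 + t) := dInj hA hK (wlt p w hw _ (by omega)) (by rw [← hM, h2]; exact h)
    have := winj p w hw _ _ (by omega) (by omega) this
    omega
  by_contra hne
  have hub : ¬ (M < n - 1 - k) := fun h => hMm M h rfl
  -- the point with delta coordinate (n-1-k)
  have hq2 : (w (k + 1) + (n - 1 - k)) % n < n := Nat.mod_lt _ (by omega)
  set j := (p.symm ⟨(w (k + 1) + (n - 1 - k)) % n, hq2⟩).val with hjdef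
  have hjn : j < n := Fin.isLt _
  have wj : w j = (w (k + 1) + (n - 1 - k)) % n := by
    rw [hw j hjn]
    exact congrArg Fin.val (p.apply_symm_apply _)
  have hdj : (w j + n - w (k + 1)) % n = n - 1 - k := by rw [wj, dAdd hA (by omega)]
  have hjk : j < k := by
    rcases Nat.lt_trichotomy j k with h | h | h
    · exact h
    · rw [h] at hdj; exact absurd (hM.trans hdj) hne
    · exfalso
      have h2 := hsuf (j - (k + 1)) (by omega)
      rw [show k + 1 + (j - (k + 1)) = j by omega] at h2
      omega
  -- the point with delta coordinate (n-1)
  have hq1 : (w (k + 1) + (n - 1)) % n < n := Nat.mod_lt _ (by omega)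
  set i := (p.symm ⟨(w (k + 1) + (n - 1)) % n, hq1⟩).val with hidef
  have hin : i < n := Fin.isLt _
  have wi : w i = (w (k + 1) + (n - 1)) % n := by
    rw [hw i hin]
    exact congrArg Fin.val (p.apply_symm_apply _)
  have hdi : (w i + n - w (k + 1)) % n = n - 1 := by rw [wi, dAdd hA (by omega)]
  have hik : i < k := by
    rcases Nat.lt_trichotomy i k with h | h | h
    · exact h
    · rw [h] at hdi; exact absurd (hM.trans hdi) hMn1
    · exfalso
      have h2 := hsuf (i - (k + 1)) (by omega)
      rw [show k + 1 + (i - (k + 1)) = i by omega] at h2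
      omega
  exact cross_core_w p w hw hnc hk hik hjk (by rw [hdi, hdj, ← hM]; omega)

lemma keyB (hnc : ∀ e ∈ pathEdges p, ∀ f ∈ pathEdges p, ¬ Crosses e f)
    (k : ℕ) (hk : k + 1 < n)
    (hsuf : ∀ t, k + 1 + t < n → (w (k + 1 + t) + n - w (k + 1)) % n = (n - t) % n)
    (hd1 : (w k + 1) % n ≠ w (k + 1))
    (hd2 : (w (k + 1) + 1) % n ≠ w k) :
    (w k + n - w (k + 1)) % n = k + 1 := by
  have hA : w (k + 1) < n := wlt p w hw _ (by omega)
  have hK : w k < n := wlt p w hw _ (by omega)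
  set M := (w k + n - w (k + 1)) % n with hM
  have hMlt : M < n := Nat.mod_lt _ (by omega)
  have hM0 : M ≠ 0 := by
    intro h
    have : w k = w (k + 1) := dInj hA hK hA (by rw [← hM, h, zeroD hA])
    have := winj p w hw _ _ (by omega) (by omega) this
    omega
  have hM1 : M ≠ 1 := by
    intro h
    exact hd2 (dSolve hA hK (by omega) (by rw [← hM, h])).symm
  have hMn1 : M ≠ n - 1 := by
    intro h
    have : w k = (w (k + 1) + (n - 1)) % n := dSolve hA hK (by omega) (by rw [← hM, h])
    exact hd1 ((inv1 hA hK).1 this)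
  have hMm : ∀ t, t < n - 1 - k → M ≠ (n - t) % n := by
    intro t htm h
    have h2 := hsuf t (by omega)
    have : w k = w (k + 1 + t) := dInj hA hK (wlt p w hw _ (by omega)) (by rw [← hM, h2]; exact h)
    have := winj p w hw _ _ (by omega) (by omega) this
    omega
  by_contra hne
  have hub : M ≤ k := by
    by_contra h'
    push_neg at h'
    have h2 := hMm (n - M) (by omega)
    rw [show n - (n - M) = M by omega, Nat.mod_eq_of_lt hMlt] at h2
    exact h2 rfl
  -- the point with delta coordinate 1  (this is a - s)
  have hq1 : (w (k + 1) + 1) % n < n := Nat.mod_lt _ (by omega)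
  set i := (p.symm ⟨(w (k + 1) + 1) % n, hq1⟩).val with hidef
  have hin : i < n := Fin.isLt _
  have wi : w i = (w (k + 1) + 1) % n := by
    rw [hw i hin]
    exact congrArg Fin.val (p.apply_symm_apply _)
  have hdi : (w i + n - w (k + 1)) % n = 1 := by rw [wi, dAdd hA (by omega)]
  have hik : i < k := by
    rcases Nat.lt_trichotomy i k with h | h | h
    · exact h
    · rw [h] at hdi; exact absurd (hM.trans hdi) hM1
    · exfalso
      have h2 := hsuf (i - (k + 1)) (by omega)
      rw [show k + 1 + (i - (k + 1)) = i by omega] at h2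
      have h3 := m2 (n := n) (y := n - (i - (k + 1))) (by omega) (by omega)
      omega
  -- the point with delta coordinate k+1 (this is b + s)
  have hq2 : (w (k + 1) + (k + 1)) % n < n := Nat.mod_lt _ (by omega)
  set j := (p.symm ⟨(w (k + 1) + (k + 1)) % n, hq2⟩).val with hjdef
  have hjn : j < n := Fin.isLt _
  have wj : w j = (w (k + 1) + (k + 1)) % n := by
    rw [hw j hjn]
    exact congrArg Fin.val (p.apply_symm_apply _)
  have hdj : (w j + n - w (k + 1)) % n = k + 1 := by rw [wj, dAdd hA (by omega)]
  have hjk : j < k := by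
    rcases Nat.lt_trichotomy j k with h | h | h
    · exact h
    · rw [h] at hdj; exact absurd (hM.trans hdj) hne
    · exfalso
      have h2 := hsuf (j - (k + 1)) (by omega)
      rw [show k + 1 + (j - (k + 1)) = j by omega] at h2
      have h3 := m2 (n := n) (y := n - (j - (k + 1))) (by omega) (by omega)
      omega
  exact cross_core_w p w hw hnc hk hik hjk (by rw [hdi, hdj, ← hM]; omega)

end W

def rev {n : ℕ} (k : ℕ) : Fin n → Fin n := fun x =>
  if h : x.val ≤ k then x else ⟨n + k - x.val, by have := x.isLt; omega⟩

lemma rev_involutive {n k : ℕ} : Function.Involutive (rev (n := n) k) := by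
  intro x
  by_cases h : x.val ≤ k
  · simp [rev, h]
  · have hx := x.isLt
    simp only [rev, dif_neg h]
    have h2 : ¬ (n + k - x.val ≤ k) := by omega
    simp only [dif_neg h2]
    exact Fin.ext (by simp only [Fin.val_mk]; omega)

def qperm {n : ℕ} (p : Equiv.Perm (Fin n)) (k : ℕ) : Equiv.Perm (Fin n) :=
  (Function.Involutive.toPerm _ (rev_involutive (n := n) (k := k))).trans p

lemma qperm_low {n : ℕ} (p : Equiv.Perm (Fin n)) (k i : ℕ) (hi : i < n) (h : i ≤ k) :
    qperm p k ⟨i, hi⟩ = p ⟨i, hi⟩ := by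
  simp only [qperm, Equiv.trans_apply, Function.Involutive.coe_toPerm, rev, dif_pos h]

lemma qperm_high {n : ℕ} (p : Equiv.Perm (Fin n)) (k i : ℕ) (hi : i < n) (h : k < i) :
    qperm p k ⟨i, hi⟩ = p ⟨n + k - i, by omega⟩ := by
  simp only [qperm, Equiv.trans_apply, Function.Involutive.coe_toPerm, rev,
    dif_neg (show ¬ (i ≤ k) by omega)]

lemma pathEdges_qperm {n : ℕ} (p : Equiv.Perm (Fin n)) (k : ℕ) (hk : k + 1 < n) :
    pathEdges (qperm p k) =
      ((pathEdges p).erase s(p ⟨k, by omega⟩, p ⟨k + 1, hk⟩)) ∪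
        {s(p ⟨k, by omega⟩, p ⟨n - 1, by omega⟩)} := by
  ext e
  rw [Finset.mem_union, Finset.mem_erase, Finset.mem_singleton, mem_pathEdges, mem_pathEdges]
  constructor
  · rintro ⟨i, hi, rfl⟩
    rcases Nat.lt_trichotomy i k with hik | rfl | hik
    · left
      rw [qperm_low p k i (by omega) (by omega), qperm_low p k (i+1) hi (by omega)]
      refine ⟨fun hEq => ?_, ⟨i, hi, rfl⟩⟩
      have := edge_inj p hi hk hEq
      omega
    · right
      rw [qperm_low p i i (by omega) (by omega), qperm_high p i (i+1) hi (by omega)]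
      have e3 : (⟨n + i - (i+1), by omega⟩ : Fin n) = ⟨n - 1, by omega⟩ := finmk _ _ (by omega)
      rw [e3]
    · left
      rw [qperm_high p k i (by omega) hik, qperm_high p k (i+1) hi (by omega)]
      have e1 : (⟨n + k - i, by omega⟩ : Fin n) = ⟨(n + k - i - 1) + 1, by omega⟩ :=
        finmk _ _ (by omega)
      have e2 : (⟨n + k - (i+1), by omega⟩ : Fin n) = ⟨n + k - i - 1, by omega⟩ :=
        finmk _ _ (by omega)
      rw [e1, e2, Sym2.eq_swap]
      refine ⟨fun hEq => ?_, ⟨n + k - i - 1, by omega, rfl⟩⟩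
      have := edge_inj p (by omega) hk hEq
      omega
  · rintro (⟨hne, j, hj, rfl⟩ | rfl)
    · rcases Nat.lt_trichotomy j k with hjk | rfl | hjk
      · refine ⟨j, hj, ?_⟩
        rw [qperm_low p k j (by omega) (by omega), qperm_low p k (j+1) hj (by omega)]
      · exact absurd rfl hne
      · refine ⟨n + k - j - 1, by omega, ?_⟩
        rw [qperm_high p k (n + k - j - 1) (by omega) (by omega),
            qperm_high p k (n + k - j - 1 + 1) (by omega) (by omega)]
        have e1 : (⟨n + k - (n + k - j - 1), by omega⟩ : Fin n) = ⟨j + 1, by omega⟩ :=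
          finmk _ _ (by omega)
        have e2 : (⟨n + k - (n + k - j - 1 + 1), by omega⟩ : Fin n) = ⟨j, by omega⟩ :=
          finmk _ _ (by omega)
        rw [e1, e2, Sym2.eq_swap]
    · refine ⟨k, hk, ?_⟩
      rw [qperm_low p k k (by omega) (by omega), qperm_high p k (k+1) hk (by omega)]
      have e3 : (⟨n + k - (k+1), by omega⟩ : Fin n) = ⟨n - 1, by omega⟩ := finmk _ _ (by omega)
      rw [e3]


set_option maxHeartbeats 2000000 in
/-- Every plane spanning path with at least one diagonal has a neighbor in `G(P)`
with one diagonal fewer. -/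
theorem exists_neighbor_lower_level (n : ℕ) (hn : 3 ≤ n) (v : PVert n)
    (hv : ¬ IsBoundary v) :
    ∃ u : PVert n, (pathGraph n).Adj v u ∧ diagCount u + 1 = diagCount v := by
  obtain ⟨⟨p, hEp⟩, hnc0⟩ := v.2
  rw [hEp] at hnc0
  have hnc : ∀ e ∈ pathEdges p, ∀ f ∈ pathEdges p, ¬ Crosses e f := hnc0
  have hn0 : 0 < n := by omega
  set w : ℕ → ℕ := fun i => (p ⟨i % n, Nat.mod_lt _ hn0⟩).val with hwdef
  have hw : ∀ i (hi : i < n), w i = (p ⟨i, hi⟩).val := by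
    intro i hi
    simp only [hwdef]
    exact congrArg (fun z : Fin n => (p z).val) (finmk _ _ (Nat.mod_eq_of_lt hi))
  have hEcan : ∀ i (hi : i + 1 < n),
      s(p ⟨i % n, Nat.mod_lt _ hn0⟩, p ⟨(i+1) % n, Nat.mod_lt _ hn0⟩) =
        s(p ⟨i, by omega⟩, p ⟨i+1, hi⟩) := by
    intro i hi
    have e1 : (⟨i % n, Nat.mod_lt _ hn0⟩ : Fin n) = ⟨i, by omega⟩ :=
      finmk _ _ (Nat.mod_eq_of_lt (by omega))
    have e2 : (⟨(i+1) % n, Nat.mod_lt _ hn0⟩ : Fin n) = ⟨i+1, hi⟩ :=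
      finmk _ _ (Nat.mod_eq_of_lt hi)
    rw [e1, e2]
  set S : Finset ℕ := (Finset.range (n - 1)).filter
      (fun i => ¬ IsHullEdge s(p ⟨i % n, Nat.mod_lt _ hn0⟩, p ⟨(i+1) % n, Nat.mod_lt _ hn0⟩))
    with hSdef
  have hSne : S.Nonempty := by
    rw [IsBoundary] at hv
    push_neg at hv
    obtain ⟨e, he, hde⟩ := hv
    rw [hEp, mem_pathEdges] at he
    obtain ⟨i, hi, rfl⟩ := he
    exact ⟨i, Finset.mem_filter.2 ⟨Finset.mem_range.2 (by omega),
      by rw [hEcan i hi]; exact hde⟩⟩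
  set k := S.max' hSne with hkdef
  have hkk : k ∈ S := S.max'_mem hSne
  rw [hSdef, Finset.mem_filter, Finset.mem_range] at hkk
  obtain ⟨hkr, hkdiag⟩ := hkk
  have hk : k + 1 < n := by omega
  rw [hEcan k hk] at hkdiag
  have hdw := hkdiag
  rw [hull_iff_s9] at hdw
  push_neg at hdw
  obtain ⟨hd1', hd2'⟩ := hdw
  have hd1 : (w k + 1) % n ≠ w (k + 1) := by
    rw [hw k (by omega), hw (k+1) hk]; exact hd1'
  have hd2 : (w (k + 1) + 1) % n ≠ w k := by
    rw [hw k (by omega), hw (k+1) hk]; exact hd2'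
  have hA : w (k+1) < n := wlt p w hw _ (by omega)
  have hK : w k < n := wlt p w hw _ (by omega)
  have hrun : ∀ j, j + 1 < n → k < j →
      (w j + 1) % n = w (j + 1) ∨ (w (j + 1) + 1) % n = w j := by
    intro j hj hkj
    have hjS : j ∉ S := fun hmem => absurd (S.le_max' j hmem) (by omega)
    rw [hSdef, Finset.mem_filter, Finset.mem_range] at hjS
    push_neg at hjS
    have hhull := hjS (by omega)
    rw [hEcan j hj, hull_iff_s9] at hhull
    rw [hw j (by omega), hw (j+1) hj]
    exact hhull
  have main : (k + 2 < n) ∧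
      (((w (n-1)) + 1) % n = w k ∨ (w k + 1) % n = w (n-1)) := by
    by_cases hc : k + 2 < n
    · have hB2 : w (k+2) < n := wlt p w hw _ (by omega)
      rcases hrun (k+1) (by omega) (by omega) with hf | hf
      · -- forward direction, case A
        rw [dSucc (a := w (k+1)) hA hA hB2, zeroD hA] at hf
        have hfd : (w (k+2) + n - w (k+1)) % n = 1 := by
          rw [hf]; exact Nat.mod_eq_of_lt (by omega)
        have hsuf := suffixA p w hw k hk hrun (fun _ => hfd)
        have hM := keyA p w hw hnc k hk hsuf hd1 hd2
        refine ⟨hc, Or.inl ?_⟩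
        have hB : w (n-1) < n := wlt p w hw _ (by omega)
        have hBd : (w (n-1) + n - w (k+1)) % n = n - 2 - k := by
          have hconv : w (k + 1 + (n - 2 - k)) = w (n-1) := congrArg w (by omega)
          rw [← hconv]; exact hsuf (n - 2 - k) (by omega)
        rw [dSucc (a := w (k+1)) hA hB hK, hM, hBd,
          show n - 2 - k + 1 = n - 1 - k by omega, Nat.mod_eq_of_lt (by omega)]
      · -- backward direction, case B
        rw [dSucc (a := w (k+1)) hA hB2 hA, zeroD hA] at hf
        have hlt : (w (k+2) + n - w (k+1)) % n < n := Nat.mod_lt _ (by omega)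
        have h2 := m2 (n := n) (y := (w (k+2) + n - w (k+1)) % n + 1) (by omega) (by omega)
        have hfd : (w (k+2) + n - w (k+1)) % n = n - 1 := by omega
        have hsuf := suffixB p w hw k hk hrun (fun _ => hfd)
        have hM := keyB p w hw hnc k hk hsuf hd1 hd2
        refine ⟨hc, Or.inr ?_⟩
        have hB : w (n-1) < n := wlt p w hw _ (by omega)
        have hBd : (w (n-1) + n - w (k+1)) % n = k + 2 := by
          have hconv : w (k + 1 + (n - 2 - k)) = w (n-1) := congrArg w (by omega)
          rw [← hconv, hsuf (n - 2 - k) (by omega),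
            show n - (n - 2 - k) = k + 2 by omega]
          exact Nat.mod_eq_of_lt (by omega)
        rw [dSucc (a := w (k+1)) hA hK hB, hBd, hM]
        exact (Nat.mod_eq_of_lt (by omega)).symm
    · exfalso
      have hsuf := suffixA p w hw k hk hrun (fun h => absurd h hc)
      have hM := keyA p w hw hnc k hk hsuf hd1 hd2
      rw [show n - 1 - k = 1 by omega] at hM
      exact hd2 (dSolve hA hK (by omega) hM).symm
  obtain ⟨hk2, hullf⟩ := main
  -- the diagonal and the new hull edge
  set d : Sym2 (Fin n) := s(p ⟨k, by omega⟩, p ⟨k+1, hk⟩) with hd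
  set f : Sym2 (Fin n) := s(p ⟨k, by omega⟩, p ⟨n-1, by omega⟩) with hf
  have hfhull : IsHullEdge f := by
    rw [hw k (by omega), hw (n-1) (by omega)] at hullf
    rw [hf, hull_iff_s9]
    tauto
  have hdmem : d ∈ pathEdges p := (mem_pathEdges p d).2 ⟨k, hk, hd⟩
  have hfd : f ≠ d := fun h => hkdiag (h ▸ hfhull)
  have hfnotmem : f ∉ pathEdges p := by
    intro hmem
    rw [mem_pathEdges] at hmem
    obtain ⟨t, ht, hEq⟩ := hmem
    rw [hf, Sym2.eq_iff] at hEq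
    rcases hEq with ⟨h1, h2⟩ | ⟨h1, h2⟩ <;>
    · have e1 : _ = _ := congrArg Fin.val (p.injective h1)
      have e2 : _ = _ := congrArg Fin.val (p.injective h2)
      simp only [Fin.val_mk] at e1 e2
      omega
  set E' : Finset (Sym2 (Fin n)) := ((pathEdges p).erase d) ∪ {f} with hE'
  have hqE : pathEdges (qperm p k) = E' := by
    rw [hE', hd, hf]; exact pathEdges_qperm p k hk
  have hnc' : ∀ e ∈ E', ∀ g ∈ E', ¬ Crosses e g := by
    intro e he g hg
    rw [hE', Finset.mem_union, Finset.mem_erase, Finset.mem_singleton] at he hg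
    rcases hg with ⟨hg1, hg2⟩ | rfl
    · rcases he with ⟨he1, he2⟩ | rfl
      · exact hnc e he2 g hg2
      · exact not_crosses_of_hull_left hfhull
    · exact not_crosses_of_hull_right hfhull
  have hNC : IsNCPath E' := ⟨⟨qperm p k, hqE.symm⟩, hnc'⟩
  refine ⟨⟨E', hNC⟩, ⟨?_, ?_⟩, ?_⟩
  · -- v ≠ u
    intro h
    have hvE : v.1 = E' := congrArg Subtype.val h
    have hfv : f ∈ v.1 := by
      rw [hvE, hE']
      exact Finset.mem_union_right _ (Finset.mem_singleton_self f)
    rw [hEp] at hfv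
    exact hfnotmem hfv
  · -- symmetric difference has two elements
    have h1 : v.1 \ E' = {d} := by
      ext x
      simp only [Finset.mem_sdiff, hE', Finset.mem_union, Finset.mem_erase,
        Finset.mem_singleton, hEp]
      constructor
      · rintro ⟨hx1, hx2⟩
        push_neg at hx2
        obtain ⟨hx3, hx4⟩ := hx2
        by_contra hxd
        exact hx3 hxd hx1
      · rintro rfl
        refine ⟨hdmem, ?_⟩
        rintro (⟨hne, _⟩ | h)
        · exact hne rfl
        · exact hfd h.symm
    have h2 : E' \ v.1 = {f} := by
      ext x
      simp only [Finset.mem_sdiff, hE', Finset.mem_union, Finset.mem_erase,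
        Finset.mem_singleton, hEp]
      constructor
      · rintro ⟨⟨hx1, hx2⟩ | rfl, hx3⟩
        · exact absurd hx2 hx3
        · rfl
      · rintro rfl
        exact ⟨Or.inr rfl, hfnotmem⟩
    show (v.1 \ E' ∪ E' \ v.1).card = 2
    rw [h1, h2, Finset.card_eq_two]
    exact ⟨d, f, fun h => hfd h.symm, by ext x; simp⟩
  · -- diagonal count
    show (Finset.filter (fun e => ¬ IsHullEdge e) E').card + 1 =
      (Finset.filter (fun e => ¬ IsHullEdge e) v.1).card
    have h3 : E'.filter (fun e => ¬ IsHullEdge e) =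
        ((pathEdges p).filter (fun e => ¬ IsHullEdge e)).erase d := by
      ext x
      simp only [hE', Finset.mem_filter, Finset.mem_union, Finset.mem_erase,
        Finset.mem_singleton]
      constructor
      · rintro ⟨⟨h4, h5⟩ | rfl, h6⟩
        · exact ⟨h4, h5, h6⟩
        · exact absurd hfhull h6
      · rintro ⟨h4, h5, h6⟩
        exact ⟨Or.inl ⟨h4, h5⟩, h6⟩
    have hdf : d ∈ (pathEdges p).filter (fun e => ¬ IsHullEdge e) :=
      Finset.mem_filter.2 ⟨hdmem, hkdiag⟩
    have hpos : 0 < ((pathEdges p).filter (fun e => ¬ IsHullEdge e)).card :=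
      Finset.card_pos.2 ⟨d, hdf⟩
    rw [hEp, h3, Finset.card_erase_of_mem hdf]
    omega



end PG
end
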